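/- arXiv:1009.2399 — 9 statements merged into one kernel-verified Lean document; each statement's English description precedes it below -/
import Mathlib

section
/- For m a natural number and a > -1 real, the integral of 1/(x^4 + 2ax^2 + 1)^(m+1) over x from 0 to infinity equals π/(2^(m+3/2) (a+1)^(m+1/2)) times P_m(a), where P_m(a) = 2^(-2m) * Σ_{k=0}^{m} 2^k * C(2m-2k, m-k) * C(m+k, k) * (a+1)^k. -/
open MeasureTheory Real
open Filter

lemma integrable_aux {c : ℝ} (hc : 0 < c) {k m : ℕ} (hk : k ≤ m) :
    Integrable (fun u : ℝ => u^(2*k) / (u^2+c)^(m+1)) := by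
  have hpos : ∀ u : ℝ, 0 < u^2 + c := fun u => by positivity
  set M : ℝ := max 1 c⁻¹ * (c^(m-k))⁻¹ with hM
  have hcont : Continuous (fun u : ℝ => u^(2*k) / (u^2+c)^(m+1)) := by
    apply Continuous.div (by continuity) (by continuity)
    intro u; positivity
  apply Integrable.mono' ((integrable_inv_one_add_sq).const_mul M) hcont.aestronglyMeasurable
  filter_upwards with u
  have hnn : (0:ℝ) ≤ u^(2*k) := by rw [pow_mul]; positivity
  have h1 : u^(2*k) ≤ (u^2+c)^k := by
    rw [pow_mul]
    exact pow_le_pow_left₀ (sq_nonneg u) (by linarith [hc]) k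
  have h3 : (1+u^2) ≤ (u^2+c) * max 1 c⁻¹ := by
    rcases le_total 1 c with h | h
    · have : max 1 c⁻¹ = 1 := max_eq_left (by rw [inv_le_one_iff₀]; right; exact h)
      rw [this]; nlinarith
    · have h4 : (1:ℝ) ≤ c⁻¹ := (one_le_inv_iff₀).2 ⟨hc, h⟩
      have : max 1 c⁻¹ = c⁻¹ := max_eq_right h4
      rw [this]
      have he : (u^2+c) * c⁻¹ = u^2 * c⁻¹ + 1 := by field_simp
      rw [he]
      nlinarith [sq_nonneg u]
  have h4 : (1:ℝ) ≤ (u^2+c)^(m-k) * (c^(m-k))⁻¹ := by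
    rw [← div_eq_mul_inv, le_div_iff₀ (by positivity), one_mul]
    exact pow_le_pow_left₀ hc.le (by nlinarith [sq_nonneg u]) _
  have hnorm : ‖u^(2*k) / (u^2+c)^(m+1)‖ = u^(2*k) / (u^2+c)^(m+1) := by
    rw [Real.norm_eq_abs, abs_of_nonneg (div_nonneg hnn (by positivity))]
  rw [hnorm, div_le_iff₀ (by positivity)]
  have expand : (u^2+c)^(m+1) = (u^2+c)^k * (u^2+c)^(m-k) * (u^2+c) := by
    have : (u^2+c)^k * (u^2+c)^(m-k) * (u^2+c) = (u^2+c)^(k+(m-k)+1) := by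
      rw [pow_add, pow_add, pow_one]
    rw [this]
    congr 1
    omega
  rw [expand]
  have hle : (1:ℝ) ≤ (1+u^2)⁻¹ * ((u^2+c) * max 1 c⁻¹) := by
    rw [← div_eq_inv_mul, le_div_iff₀ (by positivity), one_mul]
    exact h3
  calc u^(2*k) ≤ (u^2+c)^k := h1
    _ = (u^2+c)^k * 1 := (mul_one _).symm
    _ ≤ (u^2+c)^k * ((u^2+c)^(m-k) * (c^(m-k))⁻¹) :=
        mul_le_mul_of_nonneg_left h4 (by positivity)
    _ ≤ ((u^2+c)^k * ((u^2+c)^(m-k) * (c^(m-k))⁻¹)) * ((1+u^2)⁻¹ * ((u^2+c) * max 1 c⁻¹)) := by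
        nlinarith [mul_pos (pow_pos (hpos u) k)
          (mul_pos (pow_pos (hpos u) (m-k)) (inv_pos.2 (pow_pos hc (m-k)))), hle]
    _ = (M * (1+u^2)⁻¹) * ((u^2+c)^k * (u^2+c)^(m-k) * (u^2+c)) := by rw [hM]; ring

noncomputable def Bint (k m : ℕ) : ℝ := ∫ u : ℝ, u^(2*k) / (u^2+1)^(m+1)

lemma tendsto_aux {k m : ℕ} (hk : k ≤ m) :
    (Tendsto (fun v : ℝ => v^(2*k+1) * (((v^2+1)^(m+1))⁻¹)) atTop (nhds 0)) ∧
    (Tendsto (fun v : ℝ => v^(2*k+1) * (((v^2+1)^(m+1))⁻¹)) atBot (nhds 0)) := by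
  have hbound : ∀ v : ℝ, 1 ≤ |v| → ‖v^(2*k+1) * (((v^2+1)^(m+1))⁻¹)‖ ≤ (|v|^(2*(m-k)+1))⁻¹ := by
    intro v hv
    have hv0 : (0:ℝ) < |v| := by linarith
    rw [norm_mul, norm_pow, norm_inv, norm_pow, Real.norm_eq_abs, Real.norm_eq_abs]
    have habs : |v^2+1| = v^2+1 := abs_of_pos (by positivity)
    rw [habs]
    have h1 : |v|^(2*(m+1)) ≤ (v^2+1)^(m+1) := by
      rw [pow_mul, sq_abs]
      exact pow_le_pow_left₀ (by positivity) (by linarith [sq_nonneg v]) _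
    have h2 : ((v^2+1)^(m+1))⁻¹ ≤ (|v|^(2*(m+1)))⁻¹ := by
      apply inv_anti₀ (by positivity) h1
    calc |v|^(2*k+1) * ((v^2+1)^(m+1))⁻¹ ≤ |v|^(2*k+1) * (|v|^(2*(m+1)))⁻¹ :=
          mul_le_mul_of_nonneg_left h2 (by positivity)
      _ = (|v|^(2*(m-k)+1))⁻¹ := by
          rw [← div_eq_mul_inv, inv_eq_one_div, div_eq_div_iff (by positivity) (by positivity),
            one_mul, ← pow_add]
          congr 1
          omega
  refine ⟨squeeze_zero_norm' (a := fun v => (|v|^(2*(m-k)+1))⁻¹) ?_ ?_,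
    squeeze_zero_norm' (a := fun v => (|v|^(2*(m-k)+1))⁻¹) ?_ ?_⟩
  · filter_upwards [eventually_ge_atTop (1:ℝ)] with v hv
    exact hbound v (by rw [abs_of_pos (by linarith)]; exact hv)
  · exact Tendsto.inv_tendsto_atTop
      ((tendsto_pow_atTop (by omega)).comp tendsto_abs_atTop_atTop)
  · filter_upwards [eventually_le_atBot (-1:ℝ)] with v hv
    exact hbound v (by rw [abs_of_neg (by linarith)]; linarith)
  · exact Tendsto.inv_tendsto_atTop
      ((tendsto_pow_atTop (by omega)).comp tendsto_abs_atBot_atTop)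

lemma hasDeriv_aux (k m : ℕ) (v : ℝ) :
    HasDerivAt (fun v : ℝ => v^(2*k+1) * (((v^2+1)^(m+1))⁻¹))
      ((2*(k:ℝ)+1) * (v^(2*k) / (v^2+1)^(m+1)) - (2*(m:ℝ)+2) * (v^(2*k+2) / (v^2+1)^(m+2))) v := by
  have hpos : (0:ℝ) < v^2+1 := by positivity
  have h1 : HasDerivAt (fun v : ℝ => v^(2*k+1)) ((2*(k:ℝ)+1) * v^(2*k)) v := by
    have := hasDerivAt_pow (2*k+1) v
    simpa [Nat.add_sub_cancel] using this.congr_deriv (by push_cast; ring)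
  have hv : HasDerivAt (fun v : ℝ => v^2+1) (2*v) v := by
    simpa using (hasDerivAt_pow 2 v).add_const 1
  have h2 : HasDerivAt (fun v : ℝ => (v^2+1)^(m+1)) (((m:ℝ)+1) * (v^2+1)^m * (2*v)) v := by
    have := hv.fun_pow (m+1)
    simpa [Nat.add_sub_cancel] using this.congr_deriv (by push_cast; ring)
  have h3 := h2.fun_inv (by positivity)
  have h4 := h1.fun_mul h3
  refine h4.congr_deriv ?_
  have hne : (v^2+1) ≠ 0 := ne_of_gt hpos
  field_simp
  ring

lemma ibp_aux {k m : ℕ} (hk : k ≤ m) :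
    ∫ v : ℝ, v^(2*k+2) / (v^2+1)^(m+2) =
      (2*(k:ℝ)+1)/(2*(m:ℝ)+2) * ∫ v : ℝ, v^(2*k) / (v^2+1)^(m+1) := by
  have int1 : Integrable (fun v : ℝ => v^(2*k) / (v^2+1)^(m+1)) := integrable_aux one_pos hk
  have int2 : Integrable (fun v : ℝ => v^(2*k+2) / (v^2+1)^(m+2)) := by
    simpa only [Nat.mul_succ] using integrable_aux one_pos (show k+1 ≤ m+1 by omega)
  set F := fun v : ℝ => v^(2*k+1) * (((v^2+1)^(m+1))⁻¹) with hF
  have hF' : ∀ v : ℝ, HasDerivAt F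
      ((2*(k:ℝ)+1) * (v^(2*k) / (v^2+1)^(m+1)) - (2*(m:ℝ)+2) * (v^(2*k+2) / (v^2+1)^(m+2))) v :=
    fun v => hasDeriv_aux k m v
  have hint : Integrable (fun v : ℝ =>
      (2*(k:ℝ)+1) * (v^(2*k) / (v^2+1)^(m+1)) - (2*(m:ℝ)+2) * (v^(2*k+2) / (v^2+1)^(m+2))) :=
    (int1.const_mul _).sub (int2.const_mul _)
  have hFcont : Continuous F := by
    apply Continuous.mul (continuous_pow _)
    exact ((continuous_pow 2).add continuous_const |>.pow (m+1)).inv₀ (fun v => by simp only [Pi.pow_apply, Pi.add_apply]; positivity)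
  have h0 : F 0 = 0 := by
    simp [hF, zero_pow (show 2*k+1 ≠ 0 by omega)]
  have key : (∫ v : ℝ,
      ((2*(k:ℝ)+1) * (v^(2*k) / (v^2+1)^(m+1)) - (2*(m:ℝ)+2) * (v^(2*k+2) / (v^2+1)^(m+2)))) = 0 := by
    have hIoi := integral_Ioi_of_hasDerivAt_of_tendsto (f := F) (a := 0)
      (hFcont.continuousWithinAt) (fun x _ => hF' x) hint.integrableOn (tendsto_aux hk).1
    have hIic := integral_Iic_of_hasDerivAt_of_tendsto (f := F) (a := 0)
      (hFcont.continuousWithinAt) (fun x _ => hF' x) hint.integrableOn (tendsto_aux hk).2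
    rw [← intervalIntegral.integral_Iic_add_Ioi hint.integrableOn hint.integrableOn,
      hIoi, hIic, h0]
    ring
  rw [integral_sub (int1.const_mul _) (int2.const_mul _), integral_const_mul, integral_const_mul]
    at key
  have h2m : (2*(m:ℝ)+2) ≠ 0 := by positivity
  field_simp
  linarith [key]

lemma bint_zero_zero : Bint 0 0 = π := by
  rw [Bint, ← integral_univ_inv_one_add_sq]
  congr 1
  funext u
  simp [add_comm]

lemma bint_split {k m : ℕ} (hk : k ≤ m) :
    Bint k m = Bint k (m+1) + Bint (k+1) (m+1) := by
  have int1 : Integrable (fun v : ℝ => v^(2*k) / (v^2+1)^(m+1+1)) :=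
    integrable_aux one_pos (show k ≤ m+1 by omega)
  have int2 : Integrable (fun v : ℝ => v^(2*(k+1)) / (v^2+1)^(m+1+1)) :=
    integrable_aux one_pos (show k+1 ≤ m+1 by omega)
  rw [Bint, Bint, Bint, ← integral_add int1 int2]
  congr 1
  funext v
  have hpos : (0:ℝ) < v^2+1 := by positivity
  have hne : (v^2+1) ≠ 0 := ne_of_gt hpos
  have hne2 : ((v^2+1))^(m+1) ≠ 0 := by positivity
  rw [show 2*(k+1) = 2*k+2 from by ring, show m+1+1 = m+2 from rfl]
  field_simp
  ring

lemma B_val : ∀ m k : ℕ, k ≤ m → Bint k m =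
    π * (2*k).factorial * (2*(m-k)).factorial
      / (4^m * k.factorial * (m-k).factorial * m.factorial) := by
  intro m
  induction m with
  | zero =>
    intro k hk
    interval_cases k
    simp [bint_zero_zero, Nat.factorial]
  | succ m IH =>
    intro k hk
    match k with
    | 0 =>
      have hsplit := bint_split (show 0 ≤ m from Nat.zero_le m)
      norm_num at hsplit
      have hibp : Bint 1 (m+1) = (2*((0:ℕ):ℝ)+1)/(2*(m:ℝ)+2) * Bint 0 m := ibp_aux (Nat.zero_le m)
      have h2m2 : (2*(m:ℝ)+2) ≠ 0 := by positivity
      have hstep : Bint 0 (m+1) = ((2*(m:ℝ)+1) * Bint 0 m) / (2*(m:ℝ)+2) := by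
        rw [eq_div_iff h2m2]
        have hibp' : (2*(m:ℝ)+2) * Bint 1 (m+1) = Bint 0 m := by
          rw [hibp]; field_simp; simp
        linear_combination (-(2*(m:ℝ)+2))*hsplit - hibp'
      rw [hstep, IH 0 (Nat.zero_le m)]
      have f1 : (2*(m+1)).factorial = (2*m+2) * ((2*m+1) * (2*m).factorial) := by
        rw [show 2*(m+1) = (2*m+1)+1 from by ring, Nat.factorial_succ, Nat.factorial_succ]
      have f2 : (m+1).factorial = (m+1) * m.factorial := Nat.factorial_succ m
      rw [show m+1-0 = m+1 from rfl, show m-0 = m from rfl, f1, f2]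
      have p1 : ((2*m).factorial : ℝ) ≠ 0 := by positivity
      have p2 : (m.factorial : ℝ) ≠ 0 := by positivity
      push_cast
      rw [Nat.factorial_zero]
      field_simp
      ring
    | (k'+1) =>
      have hk' : k' ≤ m := by omega
      have hibp : Bint (k'+1) (m+1) = (2*(k':ℝ)+1)/(2*(m:ℝ)+2) * Bint k' m :=
        ibp_aux hk'
      rw [hibp, IH k' hk']
      have f1 : (2*(k'+1)).factorial = (2*k'+2) * ((2*k'+1) * (2*k').factorial) := by
        rw [show 2*(k'+1) = (2*k'+1)+1 from by ring, Nat.factorial_succ, Nat.factorial_succ]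
      have f2 : (m+1).factorial = (m+1) * m.factorial := Nat.factorial_succ m
      have f3 : (k'+1).factorial = (k'+1) * k'.factorial := Nat.factorial_succ k'
      rw [show m+1-(k'+1) = m-k' from by omega, f1, f2, f3]
      have p1 : ((2*k').factorial : ℝ) ≠ 0 := by positivity
      have p2 : (m.factorial : ℝ) ≠ 0 := by positivity
      have p3 : (k'.factorial : ℝ) ≠ 0 := by positivity
      have p4 : ((m-k').factorial : ℝ) ≠ 0 := by positivity
      have p5 : ((2*(m-k')).factorial : ℝ) ≠ 0 := by positivity
      push_cast
      field_simp
      ring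

lemma scaling {c : ℝ} (hc : 0 < c) (k m : ℕ) :
    ∫ u : ℝ, u^(2*k) / (u^2+c)^(m+1)
      = Real.sqrt c * c^k / c^(m+1) * ∫ v : ℝ, v^(2*k) / (v^2+1)^(m+1) := by
  have hs : 0 < Real.sqrt c := Real.sqrt_pos.2 hc
  have h := MeasureTheory.Measure.integral_comp_mul_left
    (fun u : ℝ => u^(2*k) / (u^2+c)^(m+1)) (Real.sqrt c)
  have heq : ∀ v : ℝ, ((Real.sqrt c * v)^(2*k) / ((Real.sqrt c * v)^2+c)^(m+1))
      = c^k / c^(m+1) * (v^(2*k) / (v^2+1)^(m+1)) := by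
    intro v
    have h1 : (Real.sqrt c * v)^(2*k) = c^k * v^(2*k) := by
      rw [mul_pow, pow_mul, Real.sq_sqrt hc.le]
    have h2 : ((Real.sqrt c * v)^2+c) = c * (v^2+1) := by
      rw [mul_pow, Real.sq_sqrt hc.le]; ring
    rw [h1, h2, mul_pow]
    have hc1 : (c:ℝ)^(m+1) ≠ 0 := by positivity
    have hv1 : ((v:ℝ)^2+1)^(m+1) ≠ 0 := by positivity
    field_simp
  simp only [heq] at h
  rw [integral_const_mul, abs_of_pos (inv_pos.2 hs), smul_eq_mul] at h
  have h2 : ∫ u : ℝ, u^(2*k) / (u^2+c)^(m+1)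
      = Real.sqrt c * (c^k / c^(m+1) * ∫ v : ℝ, v^(2*k) / (v^2+1)^(m+1)) := by
    rw [h, ← mul_assoc, mul_inv_cancel₀ (ne_of_gt hs), one_mul]
  rw [h2]; ring

lemma inv_image : (fun x : ℝ => x⁻¹) '' (Set.Ioi 0) = Set.Ioi 0 := by
  ext u
  constructor
  · rintro ⟨x, hx, rfl⟩
    exact inv_pos.2 (Set.mem_Ioi.mp hx)
  · intro hu
    exact ⟨u⁻¹, Set.mem_Ioi.mpr (inv_pos.2 (Set.mem_Ioi.mp hu)), inv_inv u⟩

lemma inv_subst (g : ℝ → ℝ) :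
    ∫ x in Set.Ioi (0:ℝ), g x = ∫ x in Set.Ioi (0:ℝ), (x^2)⁻¹ * g x⁻¹ := by
  have hinj : Set.InjOn (fun x : ℝ => x⁻¹) (Set.Ioi 0) := by
    intro x hx y hy hxy
    simpa using congrArg (·⁻¹) hxy
  have h := integral_image_eq_integral_abs_deriv_smul measurableSet_Ioi
    (f' := fun x : ℝ => -(x^2)⁻¹)
    (fun x hx => (hasDerivAt_inv (ne_of_gt hx)).hasDerivWithinAt) hinj g
  rw [inv_image] at h
  rw [h]
  apply MeasureTheory.setIntegral_congr_fun measurableSet_Ioi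
  intro x hx
  simp only [smul_eq_mul, abs_neg, abs_inv]
  rw [abs_of_pos (pow_pos (Set.mem_Ioi.mp hx) 2)]

lemma sub_inv_image : (fun x : ℝ => x - x⁻¹) '' (Set.Ioi 0) = Set.univ := by
  ext u
  simp only [Set.mem_image, Set.mem_univ, iff_true, Set.mem_Ioi]
  have h4 : (0:ℝ) < u^2+4 := by positivity
  set s := Real.sqrt (u^2+4) with hs
  have hs2 : s^2 = u^2+4 := Real.sq_sqrt h4.le
  have hsu : |u| < s := by
    rw [← Real.sqrt_sq_eq_abs]
    exact Real.sqrt_lt_sqrt (sq_nonneg u) (by linarith)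
  have hx : (0:ℝ) < (u+s)/2 := by
    have := abs_nonneg u
    have := neg_abs_le u
    linarith
  refine ⟨(u+s)/2, hx, ?_⟩
  have hne : (u+s)/2 ≠ 0 := ne_of_gt hx
  have key : ((u+s)/2 - ((u+s)/2)⁻¹) * ((u+s)/2) = u * ((u+s)/2) := by
    rw [sub_mul, inv_mul_cancel₀ hne]
    nlinarith [hs2]
  exact mul_right_cancel₀ hne key

lemma glasser (h : ℝ → ℝ) :
    ∫ u : ℝ, h u = ∫ x in Set.Ioi (0:ℝ), (1 + (x⁻¹)^2) * h (x - x⁻¹) := by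
  have hmono : StrictMonoOn (fun x : ℝ => x - x⁻¹) (Set.Ioi 0) := by
    intro x hx y hy hxy
    simp only [Set.mem_Ioi] at hx hy
    have h1 : y⁻¹ < x⁻¹ := (inv_lt_inv₀ hy hx).mpr hxy
    simp only
    linarith
  have hderiv : ∀ x ∈ Set.Ioi (0:ℝ),
      HasDerivWithinAt (fun x : ℝ => x - x⁻¹) (1 + (x⁻¹)^2) (Set.Ioi 0) x := by
    intro x hx
    simp only [Set.mem_Ioi] at hx
    have := (hasDerivAt_id x).sub (hasDerivAt_inv (ne_of_gt hx))
    have heq : 1 - -(x^2)⁻¹ = 1 + (x⁻¹)^2 := by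
      rw [inv_pow]
      ring
    rw [heq] at this
    exact this.hasDerivWithinAt
  have hres := integral_image_eq_integral_abs_deriv_smul measurableSet_Ioi
    hderiv hmono.injOn h
  rw [sub_inv_image] at hres
  rw [MeasureTheory.setIntegral_univ] at hres
  rw [hres]
  apply MeasureTheory.setIntegral_congr_fun measurableSet_Ioi
  intro x hx
  simp only [smul_eq_mul]
  rw [abs_of_pos (by positivity : (0:ℝ) < 1 + (x⁻¹)^2)]

lemma D_lb {a : ℝ} (ha : -1 < a) (x : ℝ) :
    min 1 (a+1) * (x^4+1) ≤ x^4+2*a*x^2+1 := by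
  rcases le_total a 0 with h|h
  · have hm : min 1 (a+1) = a+1 := min_eq_right (by linarith)
    rw [hm]
    nlinarith [sq_nonneg (x^2-1)]
  · have h1 : min 1 (a+1) ≤ 1 := min_le_left _ _
    have h2 : (0:ℝ) ≤ x^4+1 := by positivity
    nlinarith [mul_nonneg h (sq_nonneg x)]

lemma D_pos {a : ℝ} (ha : -1 < a) (x : ℝ) : 0 < x^4+2*a*x^2+1 := by
  have h1 := D_lb ha x
  have hm : 0 < min 1 (a+1) := lt_min one_pos (by linarith)
  nlinarith [show (0:ℝ) < x^4+1 by positivity]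

lemma int_D {a : ℝ} (ha : -1 < a) (m : ℕ) :
    MeasureTheory.Integrable (fun x : ℝ => 1/(x^4+2*a*x^2+1)^(m+1)) := by
  set ε := min 1 (a+1) with hε
  have hεp : 0 < ε := lt_min one_pos (by linarith)
  have hcont : Continuous (fun x : ℝ => 1/(x^4+2*a*x^2+1)^(m+1)) := by
    apply Continuous.div continuous_const (by continuity)
    intro x
    exact ne_of_gt (pow_pos (D_pos ha x) _)
  apply Integrable.mono' ((integrable_inv_one_add_sq).const_mul (2/ε^(m+1)))
    hcont.aestronglyMeasurable
  filter_upwards with x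
  have hD := D_pos ha x
  have hDp : (0:ℝ) < (x^4+2*a*x^2+1)^(m+1) := pow_pos hD _
  rw [Real.norm_eq_abs, abs_of_pos (by positivity)]
  have h1 : ε^(m+1)*(x^4+1)^(m+1) ≤ (x^4+2*a*x^2+1)^(m+1) := by
    rw [← mul_pow]
    exact pow_le_pow_left₀ (by positivity) (D_lb ha x) _
  have h2 : (x^4+1:ℝ) ≤ (x^4+1)^(m+1) :=
    le_self_pow₀ (by nlinarith [sq_nonneg (x^2)]) (Nat.succ_ne_zero m)
  have h3 : (1+x^2:ℝ) ≤ 2*(x^4+1) := by nlinarith [sq_nonneg (x^2-1)]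
  rw [div_le_iff₀ hDp, mul_comm (2/ε^(m+1)) _, mul_assoc, inv_mul_eq_div,
    div_mul_eq_mul_div, le_div_iff₀ (by positivity : (0:ℝ) < 1+x^2), one_mul]
  calc (1+x^2:ℝ) ≤ 2*(x^4+1) := h3
    _ ≤ 2*(x^4+1)^(m+1) := by nlinarith
    _ = (ε^(m+1)*(x^4+1)^(m+1)) * (2/ε^(m+1)) := by
        field_simp
    _ ≤ (x^4+2*a*x^2+1)^(m+1) * (2/ε^(m+1)) := by
        apply mul_le_mul_of_nonneg_right h1 (by positivity)
    _ = 2*(x^4+2*a*x^2+1)^(m+1)/ε^(m+1) := by ring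

lemma int_D2 {a : ℝ} (ha : -1 < a) (m : ℕ) :
    MeasureTheory.Integrable (fun x : ℝ => x^(4*m+2)/(x^4+2*a*x^2+1)^(m+1)) := by
  set ε := min 1 (a+1) with hε
  have hεp : 0 < ε := lt_min one_pos (by linarith)
  have hcont : Continuous (fun x : ℝ => x^(4*m+2)/(x^4+2*a*x^2+1)^(m+1)) := by
    apply Continuous.div (by continuity) (by continuity)
    intro x
    exact ne_of_gt (pow_pos (D_pos ha x) _)
  apply Integrable.mono' ((integrable_inv_one_add_sq).const_mul (2/ε^(m+1)))
    hcont.aestronglyMeasurable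
  filter_upwards with x
  have hD := D_pos ha x
  have hDp : (0:ℝ) < (x^4+2*a*x^2+1)^(m+1) := pow_pos hD _
  have hxnn : (0:ℝ) ≤ x^(4*m) := by
    rw [pow_mul]
    positivity
  have hxnn2 : (0:ℝ) ≤ x^(4*m+2) := by
    rw [pow_add, pow_mul]
    positivity
  rw [Real.norm_eq_abs, abs_of_nonneg (div_nonneg hxnn2 hDp.le)]
  have h1 : ε^(m+1)*(x^4+1)^(m+1) ≤ (x^4+2*a*x^2+1)^(m+1) := by
    rw [← mul_pow]
    exact pow_le_pow_left₀ (by positivity) (D_lb ha x) _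
  have h2a : x^(4*m) ≤ (x^4+1)^m :=
    le_trans (le_of_eq (pow_mul x 4 m)) (pow_le_pow_left₀ (by positivity) (by nlinarith [sq_nonneg (x^2)]) m)
  have h2 : x^(4*m)*(x^4+1) ≤ (x^4+1)^(m+1) := by
    rw [pow_succ]
    exact mul_le_mul_of_nonneg_right h2a (show (0:ℝ) ≤ x^4+1 by positivity)
  have h3 : x^2*(1+x^2) ≤ 2*(x^4+1) := by nlinarith [sq_nonneg (x^2-1), sq_nonneg x]
  have hrw : (2/ε^(m+1)) * (1+x^2)⁻¹ = (2/ε^(m+1))/(1+x^2) := (div_eq_mul_inv _ _).symm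
  rw [hrw, div_le_div_iff₀ hDp (by positivity : (0:ℝ) < 1+x^2)]
  calc x^(4*m+2)*(1+x^2) = x^(4*m)*(x^2*(1+x^2)) := by ring
    _ ≤ x^(4*m)*(2*(x^4+1)) := mul_le_mul_of_nonneg_left h3 hxnn
    _ = 2*(x^(4*m)*(x^4+1)) := by ring
    _ ≤ 2*(x^4+1)^(m+1) := by linarith [h2]
    _ = (ε^(m+1)*(x^4+1)^(m+1)) * (2/ε^(m+1)) := by
        field_simp
    _ ≤ (x^4+2*a*x^2+1)^(m+1) * (2/ε^(m+1)) := mul_le_mul_of_nonneg_right h1 (by positivity)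
    _ = 2/ε^(m+1) * (x^4+2*a*x^2+1)^(m+1) := by ring


open Finset in
noncomputable def Qp (n : ℕ) (u : ℝ) : ℝ := ∑ k ∈ range (n+1), (Nat.choose (n+k) (2*k) : ℝ) * u^(2*k)

open Finset in
lemma nat_id (n j : ℕ) :
    Nat.choose (n+2) (2*j+2) + Nat.choose n (2*j+2)
      = Nat.choose n (2*j) + 2 * Nat.choose (n+1) (2*j+2) := by
  have h1 : Nat.choose (n+2) (2*j+2) = Nat.choose (n+1) (2*j+1) + Nat.choose (n+1) (2*j+2) :=
    Nat.choose_succ_succ _ _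
  have h2 : Nat.choose (n+1) (2*j+1) = Nat.choose n (2*j) + Nat.choose n (2*j+1) :=
    Nat.choose_succ_succ _ _
  have h3 : Nat.choose (n+1) (2*j+2) = Nat.choose n (2*j+1) + Nat.choose n (2*j+2) :=
    Nat.choose_succ_succ _ _
  omega

open Finset in
lemma Qp_rec (m : ℕ) (u : ℝ) : Qp (m+2) u = (u^2+2) * Qp (m+1) u - Qp m u := by
  have hS1 : Qp (m+1) u = ∑ k ∈ range (m+3), (Nat.choose (m+1+k) (2*k) : ℝ) * u^(2*k) := by
    rw [Qp, Finset.sum_range_succ (n := m+2)]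
    rw [Nat.choose_eq_zero_of_lt (by omega)]
    simp
  have hS0 : Qp m u = ∑ k ∈ range (m+3), (Nat.choose (m+k) (2*k) : ℝ) * u^(2*k) := by
    rw [Qp, Finset.sum_range_succ (n := m+2), Finset.sum_range_succ (n := m+1)]
    rw [Nat.choose_eq_zero_of_lt (by omega), Nat.choose_eq_zero_of_lt (by omega)]
    simp
  have hT : u^2 * Qp (m+1) u
      = ∑ k ∈ range (m+3), (if k = 0 then (0:ℝ) else (Nat.choose (m+k) (2*k-2) : ℝ) * u^(2*k)) := by
    rw [Finset.sum_range_succ' _ (m+2)]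
    simp only [Nat.succ_ne_zero, if_neg, if_pos, ite_true, ite_false, add_zero, reduceIte]
    rw [Qp, Finset.mul_sum]
    apply Finset.sum_congr rfl
    intro k _
    have e1 : 2*(k+1)-2 = 2*k := by omega
    have e2 : m+(k+1) = m+1+k := by omega
    rw [e1, e2]
    ring
  have key : Qp (m+2) u + Qp m u = u^2 * Qp (m+1) u + 2 * Qp (m+1) u := by
    rw [hT, hS0]
    conv_lhs => rw [Qp]
    rw [hS1, Finset.mul_sum, show m+2+1 = m+3 from rfl,
      ← Finset.sum_add_distrib, ← Finset.sum_add_distrib]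
    apply Finset.sum_congr rfl
    intro k _
    rcases Nat.eq_zero_or_pos k with hk | hk
    · subst hk; simp; norm_num
    · obtain ⟨j, rfl⟩ := Nat.exists_eq_add_of_le hk
      rw [if_neg (by omega)]
      have e1 : 2*(1+j)-2 = 2*j := by omega
      have e2 : m+2+(1+j) = m+1+j+2 := by omega
      have e3 : m+(1+j) = m+1+j := by omega
      have e4 : 2*(1+j) = 2*j+2 := by omega
      have e5 : m+1+(1+j) = m+1+j+1 := by omega
      rw [e1, e2, e3, e4, e5]
      have hc : ((Nat.choose (m+1+j+2) (2*j+2) : ℕ) : ℝ) + (Nat.choose (m+1+j) (2*j+2) : ℕ)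
          = (Nat.choose (m+1+j) (2*j) : ℕ) + 2 * (Nat.choose (m+1+j+1) (2*j+2) : ℕ) := by
        exact_mod_cast congrArg (Nat.cast : ℕ → ℝ) (nat_id (m+1+j) j)
      linear_combination hc * u^(2*j+2)
  linarith [key]

open Finset in
lemma Qp_id (m : ℕ) (x : ℝ) (hx : x ≠ 0) :
    (1+(x⁻¹)^2) * Qp m (x - x⁻¹) = x^(2*m) + (x⁻¹)^(2*m+2) := by
  induction m using Nat.strong_induction_on with
  | _ m ih =>
    match m with
    | 0 => simp [Qp]
    | 1 =>
      have : Qp 1 (x - x⁻¹) = 1 + (x-x⁻¹)^2 := by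
        simp [Qp, Finset.sum_range_succ]
      rw [this]
      field_simp
      norm_num
      field_simp
      ring
    | (m+2) =>
      have h1 := ih (m+1) (by omega)
      have h0 := ih m (by omega)
      rw [Qp_rec]
      have expand : (1+(x⁻¹)^2) * (((x-x⁻¹)^2+2) * Qp (m+1) (x-x⁻¹) - Qp m (x-x⁻¹))
          = ((x-x⁻¹)^2+2) * ((1+(x⁻¹)^2) * Qp (m+1) (x-x⁻¹)) - (1+(x⁻¹)^2) * Qp m (x-x⁻¹) := by
        ring
      rw [expand, h1, h0]
      have hxy : x * x⁻¹ = 1 := mul_inv_cancel₀ hx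
      have e1 : x^(2*(m+1)) = x^(2*m) * x^2 := by ring
      have e2 : (x⁻¹)^(2*(m+1)+2) = (x⁻¹)^(2*m+2) * (x⁻¹)^2 := by ring
      have e3 : x^(2*(m+2)) = x^(2*m) * x^4 := by ring
      have e4 : (x⁻¹)^(2*(m+2)+2) = (x⁻¹)^(2*m+2) * (x⁻¹)^4 := by ring
      rw [e1, e2, e3, e4]
      set P := x^(2*m)
      set Q := (x⁻¹)^(2*m+2)
      set y := x⁻¹
      linear_combination ((P + Q)*(x*y+1) - 2*(P*x^2 + Q*y^2)) * hxy


open Finset in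
theorem quartic_integral_eval (m : ℕ) (a : ℝ) (ha : -1 < a) :
    ∫ x in Set.Ioi (0:ℝ), 1 / (x^4 + 2*a*x^2 + 1)^(m+1) =
      π / ((2:ℝ) ^ ((m:ℝ) + 3/2) * (a+1) ^ ((m:ℝ) + 1/2)) *
        ((2:ℝ) ^ (-(2*(m:ℤ))) *
          ∑ k ∈ Finset.range (m+1),
            (2:ℝ)^k * (Nat.choose (2*m - 2*k) (m - k)) * (Nat.choose (m+k) k) * (a+1)^k) := by
  set c : ℝ := 2*a+2 with hcdef
  have hc : 0 < c := by rw [hcdef]; linarith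
  have hsym : (∫ x in Set.Ioi (0:ℝ), 1/(x^4+2*a*x^2+1)^(m+1))
      = ∫ x in Set.Ioi (0:ℝ), x^(4*m+2)/(x^4+2*a*x^2+1)^(m+1) := by
    rw [inv_subst (fun x => 1/(x^4+2*a*x^2+1)^(m+1))]
    apply MeasureTheory.setIntegral_congr_fun measurableSet_Ioi
    intro x hx
    have hx0 : x ≠ 0 := ne_of_gt (Set.mem_Ioi.mp hx)
    have hD := D_pos ha x
    have hDne : (x^4+2*a*x^2+1) ≠ 0 := ne_of_gt hD
    have hDx : ((x⁻¹)^4+2*a*(x⁻¹)^2+1) = (x^4+2*a*x^2+1) * ((x⁻¹)^2)^2 := by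
      field_simp
      ring
    simp only []
    rw [hDx, mul_pow]
    have hxi : (((x⁻¹)^2)^2)^(m+1) = (x^(4*m+4))⁻¹ := by
      rw [← pow_mul, ← pow_mul, inv_pow]
      congr 2
      omega
    rw [hxi]
    have hDpow : (x^4+2*a*x^2+1)^(m+1) ≠ 0 := by positivity
    field_simp
    ring
  have key2I : (2:ℝ) * (∫ x in Set.Ioi (0:ℝ), 1/(x^4+2*a*x^2+1)^(m+1))
      = ∫ u : ℝ, Qp m u / (u^2+c)^(m+1) := by
    rw [glasser (fun u => Qp m u / (u^2+c)^(m+1))]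
    rw [two_mul]
    nth_rewrite 2 [hsym]
    rw [← MeasureTheory.integral_add ((int_D ha m).integrableOn) ((int_D2 ha m).integrableOn)]
    apply MeasureTheory.setIntegral_congr_fun measurableSet_Ioi
    intro x hx
    have hx0 : x ≠ 0 := ne_of_gt (Set.mem_Ioi.mp hx)
    have hD := D_pos ha x
    have hQ := Qp_id m x hx0
    have hD2 : ((x-x⁻¹)^2+c) * x^2 = x^4+2*a*x^2+1 := by
      rw [hcdef]; field_simp; ring
    have hu2c : (0:ℝ) < (x-x⁻¹)^2+c := add_pos_of_nonneg_of_pos (sq_nonneg _) hc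
    have hpow : ((x-x⁻¹)^2+c)^(m+1) * (x^2)^(m+1) = (x^4+2*a*x^2+1)^(m+1) := by
      rw [← mul_pow, hD2]
    simp only []
    rw [← add_div, ← mul_div_assoc, hQ]
    rw [div_eq_div_iff (pow_pos hD _).ne' (pow_pos hu2c _).ne']
    rw [← hpow]
    have hnum : (x^(2*m)+(x⁻¹)^(2*m+2)) * (x^2)^(m+1) = 1 + x^(4*m+2) := by
      have hxi : (x⁻¹)^(2*m+2) * x^(2*m+2) = 1 := by
        rw [← mul_pow, inv_mul_cancel₀ hx0, one_pow]
      have e : (x^2)^(m+1) = x^(2*m+2) := by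
        rw [← pow_mul, Nat.mul_succ]
      rw [e]
      linear_combination hxi
    linear_combination (-(((x-x⁻¹)^2+c)^(m+1))) * hnum
  have hWk : ∀ k, k ≤ m → (∫ u : ℝ, u^(2*k)/(u^2+c)^(m+1))
      = Real.sqrt c * c^k / c^(m+1) * (π * (2*k).factorial * (2*(m-k)).factorial
          / (4^m * k.factorial * (m-k).factorial * m.factorial)) := by
    intro k hk
    rw [scaling hc]
    congr 1
    exact B_val m k hk
  have hsum : (∫ u : ℝ, Qp m u / (u^2+c)^(m+1))
      = ∑ k ∈ Finset.range (m+1), (Nat.choose (m+k) (2*k) : ℝ)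
          * (Real.sqrt c * c^k / c^(m+1) * (π * (2*k).factorial * (2*(m-k)).factorial
            / (4^m * k.factorial * (m-k).factorial * m.factorial))) := by
    have e1 : (fun u : ℝ => Qp m u / (u^2+c)^(m+1))
        = fun u => ∑ k ∈ Finset.range (m+1),
            (Nat.choose (m+k) (2*k) : ℝ) * (u^(2*k)/(u^2+c)^(m+1)) := by
      funext u
      rw [Qp, Finset.sum_div]
      exact Finset.sum_congr rfl fun k _ => mul_div_assoc _ _ _
    rw [e1, MeasureTheory.integral_finset_sum _
      (fun k hk => (integrable_aux hc (Nat.lt_succ_iff.mp (Finset.mem_range.mp hk))).const_mul _)]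
    exact Finset.sum_congr rfl fun k hk => by
      rw [integral_const_mul, hWk k (Nat.lt_succ_iff.mp (Finset.mem_range.mp hk))]
  have hI : (∫ x in Set.Ioi (0:ℝ), 1/(x^4+2*a*x^2+1)^(m+1))
      = (∑ k ∈ Finset.range (m+1), (Nat.choose (m+k) (2*k) : ℝ)
          * (Real.sqrt c * c^k / c^(m+1) * (π * (2*k).factorial * (2*(m-k)).factorial
            / (4^m * k.factorial * (m-k).factorial * m.factorial)))) / 2 := by
    rw [eq_div_iff (two_ne_zero)]
    rw [mul_comm]
    rw [key2I, hsum]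
  rw [show (∫ x in Set.Ioi (0:ℝ), 1 / (x^4 + 2*a*x^2 + 1)^(m+1))
      = ∫ x in Set.Ioi (0:ℝ), 1/(x^4+2*a*x^2+1)^(m+1) from rfl, hI]
  have e2 : (2:ℝ)^((m:ℝ)+3/2) = 2^m * (2*Real.sqrt 2) := by
    rw [Real.rpow_add two_pos, Real.rpow_natCast]
    congr 1
    rw [show (3/2:ℝ) = 1+1/2 by norm_num, Real.rpow_add two_pos, Real.rpow_one,
      Real.sqrt_eq_rpow]
  have e3 : (a+1)^((m:ℝ)+1/2) = (a+1)^m * Real.sqrt (a+1) := by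
    rw [Real.rpow_add (by linarith), Real.rpow_natCast, Real.sqrt_eq_rpow]
  have eQ : (2:ℝ)^(-(2*(m:ℤ))) = ((4:ℝ)^m)⁻¹ := by
    rw [zpow_neg]
    congr 1
    rw [show (2*(m:ℤ)) = ((2*m : ℕ) : ℤ) by push_cast; ring, zpow_natCast, pow_mul]
    norm_num
  have h2s : Real.sqrt 2 * Real.sqrt 2 = 2 := Real.mul_self_sqrt (by norm_num)
  have has : Real.sqrt (a+1) * Real.sqrt (a+1) = a+1 := Real.mul_self_sqrt (by linarith)
  have eP : π / ((2:ℝ)^((m:ℝ)+3/2) * (a+1)^((m:ℝ)+1/2))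
      = π * (Real.sqrt 2 * Real.sqrt (a+1)) / (2^(m+2) * (a+1)^(m+1)) := by
    have hs2p : (0:ℝ) < Real.sqrt 2 := Real.sqrt_pos.2 (by norm_num)
    have hsap : (0:ℝ) < Real.sqrt (a+1) := Real.sqrt_pos.2 (by linarith)
    have hb1 : (0:ℝ) < 2^m*(2*Real.sqrt 2)*((a+1)^m*Real.sqrt (a+1)) :=
      mul_pos (mul_pos (pow_pos two_pos m) (mul_pos two_pos hs2p))
        (mul_pos (pow_pos (by linarith : (0:ℝ) < a+1) m) hsap)
    have hb2 : (0:ℝ) < (2:ℝ)^(m+2)*(a+1)^(m+1) :=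
      mul_pos (pow_pos two_pos _) (pow_pos (by linarith) _)
    rw [e2, e3, div_eq_div_iff hb1.ne' hb2.ne']
    linear_combination (-2*π*2^m*(a+1)^m*(Real.sqrt (a+1)*Real.sqrt (a+1)))*h2s
      + (-4*π*2^m*(a+1)^m)*has
  rw [eP, eQ, Finset.mul_sum, Finset.mul_sum, Finset.sum_div]
  apply Finset.sum_congr rfl
  intro k hk
  have hkm : k ≤ m := Nat.lt_succ_iff.mp (Finset.mem_range.mp hk)
  have hsqc : Real.sqrt c = Real.sqrt 2 * Real.sqrt (a+1) := by
    rw [hcdef, show 2*a+2 = 2*(a+1) by ring, Real.sqrt_mul (by norm_num : (0:ℝ) ≤ 2)]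
  have hck : c^k = 2^k * (a+1)^k := by
    rw [hcdef, show 2*a+2 = 2*(a+1) by ring, mul_pow]
  have hcm : c^(m+1) = 2^(m+1) * (a+1)^(m+1) := by
    rw [hcdef, show 2*a+2 = 2*(a+1) by ring, mul_pow]
  rw [hsqc, hck, hcm]
  rw [show 2*m - 2*k = 2*(m-k) from by omega]
  rw [Nat.cast_choose ℝ (show 2*k ≤ m+k by omega),
      Nat.cast_choose ℝ (show m-k ≤ 2*(m-k) by omega),
      Nat.cast_choose ℝ (show k ≤ m+k by omega)]
  rw [show m+k-2*k = m-k from by omega, show 2*(m-k)-(m-k) = m-k from by omega,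
      show m+k-k = m from by omega]
  have p1 : ((2*k).factorial : ℝ) ≠ 0 := by positivity
  have p2 : ((2*(m-k)).factorial : ℝ) ≠ 0 := by positivity
  have p3 : (k.factorial : ℝ) ≠ 0 := by positivity
  have p4 : ((m-k).factorial : ℝ) ≠ 0 := by positivity
  have p5 : (m.factorial : ℝ) ≠ 0 := by positivity
  have p6 : ((m+k).factorial : ℝ) ≠ 0 := by positivity
  have pa : (a+1) ≠ 0 := by linarith
  field_simp
  ring
end

section
/- For complex numbers A_1, ..., A_n (n ≥ 1) with positive real parts, 1/(A_1 ⋯ A_n) = (n-1)! * ∫ over the simplex {(x_1,...,x_n) ∈ [0,1]^n : x_1 + ... + x_n = 1} of dσ / (x_1 A_1 + ... + x_n A_n)^n, where dσ is the measure obtained by integrating over x_1,...,x_{n-1} with x_n = 1 - x_1 - ... - x_{n-1}. -/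
open MeasureTheory

lemma comb_re_pos {a b : ℂ} (ha : 0 < a.re) (hb : 0 < b.re) {u : ℝ} (h0 : 0 ≤ u) (h1 : u ≤ 1) :
    0 < ((1 - (u:ℂ)) * a + (u:ℂ) * b).re := by
  have : ((1 - (u:ℂ)) * a + (u:ℂ) * b).re = (1-u) * a.re + u * b.re := by
    simp [Complex.add_re, Complex.mul_re, Complex.sub_re, Complex.sub_im]
  rw [this]
  rcases lt_or_eq_of_le h1 with h | h
  · nlinarith
  · subst h; simpa using hb

lemma comb_ne {a b : ℂ} (ha : 0 < a.re) (hb : 0 < b.re) {u : ℝ} (h0 : 0 ≤ u) (h1 : u ≤ 1) :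
    (1 - (u:ℂ)) * a + (u:ℂ) * b ≠ 0 := by
  intro h
  have := comb_re_pos ha hb h0 h1
  rw [h] at this
  simp at this

lemma lemB (n : ℕ) {a b : ℂ} (ha : 0 < a.re) (hb : 0 < b.re) :
    ∫ v in (0:ℝ)..1, (v:ℂ)^n / ((1 - (v:ℂ)) * a + (v:ℂ) * b)^(n+1+1)
      = 1 / (((n:ℂ)+1) * a * b^(n+1)) := by
  have ha0 : a ≠ 0 := by intro h; rw [h] at ha; simp at ha
  have hb0 : b ≠ 0 := by intro h; rw [h] at hb; simp at hb
  have hn1 : ((n:ℂ)+1) ≠ 0 := by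
    exact_mod_cast Nat.cast_add_one_ne_zero (n := n) (R := ℂ)
  set c : ℝ → ℂ := fun v => (1 - (v:ℂ)) * a + (v:ℂ) * b with hc
  have hcne : ∀ v ∈ Set.uIcc (0:ℝ) 1, c v ≠ 0 := by
    intro v hv
    rw [Set.uIcc_of_le zero_le_one] at hv
    exact comb_ne ha hb hv.1 hv.2
  set F : ℝ → ℂ := fun v => (v:ℂ)^(n+1) / (((n:ℂ)+1) * a * (c v)^(n+1)) with hF
  have hderiv : ∀ v ∈ Set.uIcc (0:ℝ) 1,
      HasDerivAt F ((v:ℂ)^n / (c v)^(n+1+1)) v := by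
    intro v hv
    have hcv := hcne v hv
    have h1 : HasDerivAt (fun z : ℂ => (1 - z) * a + z * b) (b - a) (v:ℂ) := by
      have := (((hasDerivAt_id (v:ℂ)).const_sub 1).mul_const a).add
        ((hasDerivAt_id (v:ℂ)).mul_const b)
      simpa [sub_eq_neg_add, Pi.add_def] using this
    have h2 : HasDerivAt (fun z : ℂ => ((n:ℂ)+1) * a * ((1 - z) * a + z * b)^(n+1))
        (((n:ℂ)+1) * a * ((n+1 : ℕ) * ((1-(v:ℂ))*a + (v:ℂ)*b)^n * (b - a))) (v:ℂ) :=
      (h1.pow (n+1)).const_mul _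
    have h3 : HasDerivAt (fun z : ℂ => z^(n+1)) ((n+1 : ℕ) * (v:ℂ)^n) (v:ℂ) := by
      simpa using hasDerivAt_pow (n+1) (v:ℂ)
    have hdne : ((n:ℂ)+1) * a * ((1-(v:ℂ))*a + (v:ℂ)*b)^(n+1) ≠ 0 :=
      mul_ne_zero (mul_ne_zero hn1 ha0) (pow_ne_zero _ hcv)
    have h4 := (h3.div h2 hdne)
    have h5 := h4.comp_ofReal
    convert h5 using 1
    · rfl
    rw [hc]
    have hcv' : (1 - (v:ℂ)) * a + (v:ℂ) * b ≠ 0 := hcv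
    push_cast
    field_simp
    ring
  have hcont : ContinuousOn (fun v : ℝ => (v:ℂ)^n / (c v)^(n+1+1)) (Set.uIcc (0:ℝ) 1) := by
    apply ContinuousOn.div
    · exact (Complex.continuous_ofReal.pow n).continuousOn
    · apply Continuous.continuousOn
      continuity
    · intro v hv
      exact pow_ne_zero _ (hcne v hv)
  have hint : IntervalIntegrable (fun v : ℝ => (v:ℂ)^n / (c v)^(n+1+1)) volume 0 1 :=
    hcont.intervalIntegrable
  rw [intervalIntegral.integral_eq_sub_of_hasDerivAt hderiv hint]
  have hc1 : c 1 = b := by rw [hc]; push_cast; ring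
  have hc0 : c 0 = a := by rw [hc]; push_cast; ring
  rw [hF]
  simp only [hc1, hc0]
  push_cast
  rw [one_pow, zero_pow (by omega : n+1 ≠ 0)]
  field_simp
  ring

lemma lemB' (n : ℕ) {a b : ℂ} (ha : 0 < a.re) (hb : 0 < b.re) :
    ∫ u in (0:ℝ)..1, (((1-u : ℝ)):ℂ)^n / ((u:ℂ) * a + (1 - (u:ℂ)) * b)^(n+1+1)
      = 1 / (((n:ℂ)+1) * a * b^(n+1)) := by
  have h := intervalIntegral.integral_comp_sub_left
    (a := 0) (b := 1) (fun v : ℝ => (v:ℂ)^n / ((1 - (v:ℂ)) * a + (v:ℂ) * b)^(n+1+1)) 1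
  simp only [sub_zero, sub_self] at h
  rw [← lemB n ha hb, ← h]
  apply intervalIntegral.integral_congr
  intro u _
  push_cast
  ring_nf

lemma simplex_isClosed (n : ℕ) (t : ℝ) :
    IsClosed {x : Fin n → ℝ | (∀ i, 0 ≤ x i) ∧ ∑ i, x i ≤ t} := by
  have : {x : Fin n → ℝ | (∀ i, 0 ≤ x i) ∧ ∑ i, x i ≤ t}
      = (⋂ i, {x : Fin n → ℝ | 0 ≤ x i}) ∩ {x : Fin n → ℝ | ∑ i, x i ≤ t} := by
    ext x; simp [Set.mem_iInter]
  rw [this]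
  exact IsClosed.inter
    (isClosed_iInter fun i => isClosed_le continuous_const (continuous_apply i))
    (isClosed_le (continuous_finset_sum _ fun i _ => continuous_apply i) continuous_const)

lemma simplex_isCompact (n : ℕ) :
    IsCompact {x : Fin n → ℝ | (∀ i, 0 ≤ x i) ∧ ∑ i, x i ≤ 1} := by
  apply IsCompact.of_isClosed_subset
    (isCompact_univ_pi fun _ : Fin n => isCompact_Icc (a := (0:ℝ)) (b := 1))
    (simplex_isClosed n 1)
  intro x hx
  simp only [Set.mem_univ_pi, Set.mem_Icc]
  intro i
  refine ⟨hx.1 i, ?_⟩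
  calc x i ≤ ∑ j, x j := Finset.single_le_sum (fun j _ => hx.1 j) (Finset.mem_univ i)
  _ ≤ 1 := hx.2

lemma denom_re_pos (n : ℕ) (A : Fin (n+1) → ℂ) (hA : ∀ i, 0 < (A i).re)
    (x : Fin n → ℝ) (hx0 : ∀ i, 0 ≤ x i) (hx1 : ∑ i, x i ≤ 1) :
    0 < ((∑ i : Fin n, (x i : ℂ) * A i.castSucc
          + (1 - ∑ i : Fin n, (x i : ℂ)) * A (Fin.last n)).re) := by
  have hre : (∑ i : Fin n, (x i : ℂ) * A i.castSucc
          + (1 - ∑ i : Fin n, (x i : ℂ)) * A (Fin.last n)).re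
      = ∑ i : Fin n, x i * (A i.castSucc).re + (1 - ∑ i, x i) * (A (Fin.last n)).re := by
    rw [Complex.add_re, Complex.re_sum]
    congr 1
    · apply Finset.sum_congr rfl
      intro i _
      simp [Complex.mul_re]
    · have : (1 - ∑ i : Fin n, ((x i : ℂ))) = (((1 - ∑ i, x i : ℝ)) : ℂ) := by push_cast; ring
      rw [this, Complex.re_ofReal_mul]
  rw [hre]
  set m := (Finset.univ : Finset (Fin (n+1))).inf' Finset.univ_nonempty (fun i => (A i).re) with hm
  have hmpos : 0 < m := by
    rw [hm, Finset.lt_inf'_iff]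
    intro i _
    exact hA i
  have hmle : ∀ i : Fin (n+1), m ≤ (A i).re := fun i => Finset.inf'_le _ (Finset.mem_univ i)
  have h1 : ∑ i : Fin n, x i * m ≤ ∑ i : Fin n, x i * (A i.castSucc).re :=
    Finset.sum_le_sum fun i _ => mul_le_mul_of_nonneg_left (hmle _) (hx0 i)
  have h2 : (1 - ∑ i, x i) * m ≤ (1 - ∑ i, x i) * (A (Fin.last n)).re :=
    mul_le_mul_of_nonneg_left (hmle _) (by linarith)
  have h3 : ∑ i : Fin n, x i * m = (∑ i, x i) * m := by rw [Finset.sum_mul]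
  nlinarith [add_le_add h1 h2]

lemma denom_continuous (n : ℕ) (A : Fin (n+1) → ℂ) :
    Continuous (fun x : Fin n → ℝ => ∑ i : Fin n, (x i : ℂ) * A i.castSucc
          + (1 - ∑ i : Fin n, (x i : ℂ)) * A (Fin.last n)) := by
  apply Continuous.add
  · exact continuous_finset_sum _ fun i _ =>
      (Complex.continuous_ofReal.comp (continuous_apply i)).mul continuous_const
  · exact (Continuous.sub continuous_const (continuous_finset_sum _ fun i _ =>
      Complex.continuous_ofReal.comp (continuous_apply i))).mul continuous_const

lemma integrableOn_simplex (n : ℕ) (A : Fin (n+1) → ℂ) (hA : ∀ i, 0 < (A i).re) :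
    IntegrableOn (fun x : Fin n → ℝ =>
        1 / ((∑ i : Fin n, (x i : ℂ) * A i.castSucc
          + (1 - ∑ i : Fin n, (x i : ℂ)) * A (Fin.last n)) ^ (n+1)))
      {x : Fin n → ℝ | (∀ i, 0 ≤ x i) ∧ ∑ i, x i ≤ 1} volume := by
  apply ContinuousOn.integrableOn_compact (simplex_isCompact n)
  apply ContinuousOn.div continuousOn_const
    ((denom_continuous n A).pow (n+1)).continuousOn
  intro x hx
  apply pow_ne_zero
  intro h
  beta_reduce at h
  have := denom_re_pos n A hA x hx.1 hx.2
  rw [h] at this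
  simp at this

lemma insertNth_sum {n : ℕ} (u : ℝ) (y : Fin n → ℝ) (B : Fin (n+1) → ℂ) :
    ∑ i : Fin (n+1), ((Fin.insertNth (α := fun _ : Fin (n+1) => ℝ) 0 u y) i : ℂ) * B i
      = (u:ℂ) * B 0 + ∑ i : Fin n, (y i : ℂ) * B i.succ := by
  rw [Fin.sum_univ_succAbove _ (0 : Fin (n+1))]
  simp [Fin.insertNth_apply_same, Fin.insertNth_apply_succAbove, Fin.zero_succAbove]

lemma insertNth_sum' {n : ℕ} (u : ℝ) (y : Fin n → ℝ) :
    ∑ i : Fin (n+1), ((Fin.insertNth (α := fun _ : Fin (n+1) => ℝ) 0 u y) i : ℂ)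
      = (u:ℂ) + ∑ i : Fin n, (y i : ℂ) := by
  rw [Fin.sum_univ_succAbove _ (0 : Fin (n+1))]
  simp [Fin.insertNth_apply_same, Fin.insertNth_apply_succAbove, Fin.zero_succAbove]

theorem schwinger_parametrization (n : ℕ) (A : Fin (n+1) → ℂ)
    (hA : ∀ i, 0 < (A i).re) :
    1 / (∏ i, A i) =
      (n.factorial : ℂ) *
        ∫ x in {x : Fin n → ℝ | (∀ i, 0 ≤ x i) ∧ ∑ i, x i ≤ 1},
          1 / ((∑ i : Fin n, (x i : ℂ) * A i.castSucc
                + (1 - ∑ i : Fin n, (x i : ℂ)) * A (Fin.last n)) ^ (n+1)) := by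
  induction n with
  | zero =>
      have hset : {x : Fin 0 → ℝ | (∀ i, 0 ≤ x i) ∧ ∑ i, x i ≤ 1} = Set.univ := by
        ext x
        simp
      rw [hset]
      simp only [Finset.univ_eq_empty, Finset.sum_empty, Finset.prod_empty]
      rw [Measure.restrict_univ, integral_const]
      have hvol : (volume : Measure (Fin 0 → ℝ)) Set.univ = 1 := by
        rw [MeasureTheory.volume_pi, Measure.pi_univ]
        simp
      simp only [Measure.real, hvol]
      have : ∏ i : Fin 1, A i = A (Fin.last 0) := by
        rw [Fin.prod_univ_one]
        rfl
      rw [this]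
      simp
  | succ n ih =>
      have hA0 : 0 < (A 0).re := hA 0
      have hA0ne : A 0 ≠ 0 := by intro h; rw [h] at hA0; simp at hA0
      set S : Set (Fin (n+1) → ℝ) := {x | (∀ i, 0 ≤ x i) ∧ ∑ i, x i ≤ 1} with hS
      set T : Set (Fin n → ℝ) := {y | (∀ i, 0 ≤ y i) ∧ ∑ i, y i ≤ 1} with hT
      set g : (Fin (n+1) → ℝ) → ℂ := fun x =>
        1 / ((∑ i : Fin (n+1), (x i : ℂ) * A i.castSucc
          + (1 - ∑ i : Fin (n+1), (x i : ℂ)) * A (Fin.last (n+1))) ^ (n+1+1)) with hg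
      set L : (Fin n → ℝ) → ℂ := fun y =>
        ∑ i : Fin n, (y i : ℂ) * A i.succ.castSucc
          + (1 - ∑ i : Fin n, (y i : ℂ)) * A (Fin.last (n+1)) with hL
      have hTm : MeasurableSet T := (simplex_isClosed n 1).measurableSet
      have hSm : MeasurableSet S := (simplex_isClosed (n+1) 1).measurableSet
      have hTcomp : IsCompact T := simplex_isCompact n
      have hLre : ∀ y ∈ T, 0 < (L y).re := fun y hy =>
        denom_re_pos n (fun i => A i.succ) (fun i => hA _) y hy.1 hy.2
      have hLcont : Continuous L := denom_continuous n (fun i => A i.succ)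
      have hgS : IntegrableOn g S volume := integrableOn_simplex (n+1) A hA
      set e := MeasurableEquiv.piFinSuccAbove (fun _ : Fin (n+1) => ℝ) 0 with he
      have hes : ∀ (u : ℝ) (y : Fin n → ℝ), e.symm (u, y) = Fin.insertNth 0 u y := by
        intro u y
        rw [he, MeasurableEquiv.piFinSuccAbove_symm_apply]
        rfl
      have mp : MeasurePreserving (⇑e) (volume : Measure (Fin (n+1) → ℝ))
          ((volume : Measure ℝ).prod (volume : Measure (Fin n → ℝ))) := by
        have := measurePreserving_piFinSuccAbove (fun _ : Fin (n+1) => (volume : Measure ℝ)) 0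
        simp only [← MeasureTheory.volume_pi] at this
        convert this using 1
      have hGint : Integrable (fun p : ℝ × (Fin n → ℝ) => S.indicator g (e.symm p))
          ((volume : Measure ℝ).prod (volume : Measure (Fin n → ℝ))) :=
        ((mp.symm e).integrable_comp_emb e.symm.measurableEmbedding).mpr
          ((integrable_indicator_iff hSm).mpr hgS)
      have step1 : ∫ x in S, g x
          = ∫ u : ℝ, ∫ y : Fin n → ℝ, S.indicator g (e.symm (u, y)) := by
        rw [← integral_indicator hSm]
        rw [← (mp.symm e).integral_comp e.symm.measurableEmbedding (S.indicator g)]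
        rw [integral_prod _ hGint]
      have hmem : ∀ (u : ℝ) (y : Fin n → ℝ),
          (Fin.insertNth 0 u y ∈ S) ↔ ((0 ≤ u ∧ ∀ i, 0 ≤ y i) ∧ u + ∑ i, y i ≤ 1) := by
        intro u y
        rw [hS]
        simp only [Set.mem_setOf_eq, Fin.forall_iff_succAbove (0 : Fin (n+1)),
          Fin.sum_univ_succAbove _ (0 : Fin (n+1)), Fin.insertNth_apply_same,
          Fin.insertNth_apply_succAbove]
      have step2 : ∀ u : ℝ, (∫ y, S.indicator g (e.symm (u, y)))
          = (Set.Icc (0:ℝ) 1).indicator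
            (fun u => ∫ y in {y : Fin n → ℝ | (∀ i, 0 ≤ y i) ∧ ∑ i, y i ≤ 1 - u},
              g (Fin.insertNth 0 u y)) u := by
        intro u
        by_cases hu : u ∈ Set.Icc (0:ℝ) 1
        · rw [Set.indicator_of_mem hu]
          have hset : (fun y => S.indicator g (e.symm (u, y)))
              = Set.indicator {y : Fin n → ℝ | (∀ i, 0 ≤ y i) ∧ ∑ i, y i ≤ 1 - u}
                (fun y => g (Fin.insertNth 0 u y)) := by
            funext y
            rw [hes u y, Set.indicator_apply, Set.indicator_apply]
            refine if_congr ?_ rfl rfl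
            rw [hmem u y]
            constructor
            · rintro ⟨⟨_, h2⟩, h3⟩; exact ⟨h2, by linarith⟩
            · rintro ⟨h2, h3⟩; exact ⟨⟨hu.1, h2⟩, by linarith⟩
          rw [hset, integral_indicator (simplex_isClosed n (1-u)).measurableSet]
        · rw [Set.indicator_of_notMem hu]
          have hzero : ∀ y : Fin n → ℝ, S.indicator g (e.symm (u, y)) = 0 := by
            intro y
            rw [hes u y]
            apply Set.indicator_of_notMem
            rw [hmem u y]
            rintro ⟨⟨h1, h2⟩, h3⟩
            apply hu
            refine ⟨h1, ?_⟩
            have : 0 ≤ ∑ i, y i := Finset.sum_nonneg fun i _ => h2 i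
            linarith
          simp only [hzero, integral_zero]
      have step3 : ∫ x in S, g x
          = ∫ u in Set.Ioo (0:ℝ) 1,
              ∫ y in {y : Fin n → ℝ | (∀ i, 0 ≤ y i) ∧ ∑ i, y i ≤ 1 - u},
                g (Fin.insertNth 0 u y) := by
        rw [step1]
        simp only [step2]
        rw [integral_indicator measurableSet_Icc, integral_Icc_eq_integral_Ioo]
      have hpt : ∀ (u : ℝ) (y : Fin n → ℝ),
          g (Fin.insertNth 0 u ((1-u) • y))
            = 1 / (((u:ℂ) * A 0 + (1 - (u:ℂ)) * L y) ^ (n+1+1)) := by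
        intro u y
        simp only [hg]
        have hD : ∑ i : Fin (n+1), ((Fin.insertNth (α := fun _ : Fin (n+1) => ℝ) 0 u ((1-u) • y)) i : ℂ) * A i.castSucc
            + (1 - ∑ i : Fin (n+1), ((Fin.insertNth (α := fun _ : Fin (n+1) => ℝ) 0 u ((1-u) • y)) i : ℂ)) * A (Fin.last (n+1))
            = (u:ℂ) * A 0 + (1 - (u:ℂ)) * L y := by
          rw [insertNth_sum u ((1-u) • y) (fun i => A i.castSucc),
            insertNth_sum' u ((1-u) • y)]
          simp only [Fin.castSucc_zero, Pi.smul_apply, smul_eq_mul,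
            Complex.ofReal_mul, hL]
          rw [show (∑ i : Fin n, (((1-u : ℝ)):ℂ) * (y i : ℂ) * A i.succ.castSucc)
              = (((1-u : ℝ)):ℂ) * ∑ i : Fin n, (y i : ℂ) * A i.succ.castSucc by
            rw [Finset.mul_sum]; apply Finset.sum_congr rfl; intro i _; ring]
          rw [show (∑ i : Fin n, (((1-u : ℝ)):ℂ) * (y i : ℂ))
              = (((1-u : ℝ)):ℂ) * ∑ i : Fin n, (y i : ℂ) by rw [Finset.mul_sum]]
          push_cast
          ring
        rw [hD]
      have step4 : ∀ u ∈ Set.Ioo (0:ℝ) 1,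
          ∫ y in {y : Fin n → ℝ | (∀ i, 0 ≤ y i) ∧ ∑ i, y i ≤ 1 - u},
              g (Fin.insertNth 0 u y)
            = ∫ y in T, ((1-u)^n : ℝ) • (1 / (((u:ℂ) * A 0 + (1 - (u:ℂ)) * L y) ^ (n+1+1))) := by
        intro u hu
        have hc : 0 < 1 - u := by linarith [hu.2]
        have key := MeasureTheory.Measure.integral_comp_smul (volume : Measure (Fin n → ℝ))
          (Set.indicator {y : Fin n → ℝ | (∀ i, 0 ≤ y i) ∧ ∑ i, y i ≤ 1 - u}
            (fun y => g (Fin.insertNth 0 u y))) (1-u)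
        rw [Module.finrank_fintype_fun_eq_card, Fintype.card_fin] at key
        rw [abs_of_pos (by positivity : (0:ℝ) < ((1-u) ^ n)⁻¹)] at key
        have hind : ∀ y : Fin n → ℝ,
            Set.indicator {y : Fin n → ℝ | (∀ i, 0 ≤ y i) ∧ ∑ i, y i ≤ 1 - u}
              (fun y => g (Fin.insertNth 0 u y)) ((1-u) • y)
            = Set.indicator T (fun y => g (Fin.insertNth 0 u ((1-u) • y))) y := by
          intro y
          rw [Set.indicator_apply, Set.indicator_apply]
          refine if_congr ?_ rfl rfl
          rw [hT]
          simp only [Set.mem_setOf_eq, Pi.smul_apply, smul_eq_mul, ← Finset.mul_sum]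
          constructor
          · rintro ⟨h1, h2⟩
            exact ⟨fun i => (mul_nonneg_iff_of_pos_left hc).mp (h1 i),
              (mul_le_iff_le_one_right hc).mp h2⟩
          · rintro ⟨h1, h2⟩
            exact ⟨fun i => mul_nonneg hc.le (h1 i), (mul_le_iff_le_one_right hc).mpr h2⟩
        simp only [hind] at key
        rw [integral_indicator hTm] at key
        rw [integral_indicator (simplex_isClosed n (1-u)).measurableSet] at key
        have hsolve : ∫ y in {y : Fin n → ℝ | (∀ i, 0 ≤ y i) ∧ ∑ i, y i ≤ 1 - u},
            g (Fin.insertNth 0 u y)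
            = ((1-u)^n : ℝ) • ∫ y in T, g (Fin.insertNth 0 u ((1-u) • y)) := by
          rw [key, smul_smul, mul_inv_cancel₀ (by positivity : ((1-u):ℝ)^n ≠ 0), one_smul]
        rw [hsolve]
        rw [integral_smul]
        congr 1
        apply setIntegral_congr_fun hTm
        intro y _
        exact hpt u y
      have step5 : ∫ x in S, g x
          = ∫ u in Set.Ioo (0:ℝ) 1, ∫ y in T,
              ((1-u)^n : ℝ) • (1 / (((u:ℂ) * A 0 + (1 - (u:ℂ)) * L y) ^ (n+1+1))) := by
        rw [step3]
        exact setIntegral_congr_fun measurableSet_Ioo (fun u hu => step4 u hu)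
      set F : ℝ × (Fin n → ℝ) → ℂ := fun p =>
        ((1 - p.1)^n : ℝ) • (1 / (((p.1:ℂ) * A 0 + (1 - (p.1:ℂ)) * L p.2) ^ (n+1+1))) with hF
      have hFcont : ContinuousOn F (Set.Icc (0:ℝ) 1 ×ˢ T) := by
        rw [hF]
        apply ContinuousOn.fun_smul
        · exact ((continuous_const.sub continuous_fst).pow n).continuousOn
        · apply ContinuousOn.div continuousOn_const
          · apply Continuous.continuousOn
            apply Continuous.pow
            apply Continuous.add
            · exact (Complex.continuous_ofReal.comp continuous_fst).mul continuous_const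
            · exact (continuous_const.sub
                (Complex.continuous_ofReal.comp continuous_fst)).mul
                (hLcont.comp continuous_snd)
          · rintro ⟨u, y⟩ hp
            apply pow_ne_zero
            rw [show (u:ℂ) * A 0 + (1 - (u:ℂ)) * L y
                = (1 - (u:ℂ)) * L y + (u:ℂ) * A 0 by ring]
            exact comb_ne (hLre y hp.2) hA0 hp.1.1 hp.1.2
      have hFint : Integrable F
          (((volume : Measure ℝ).restrict (Set.Ioo 0 1)).prod
            ((volume : Measure (Fin n → ℝ)).restrict T)) := by
        rw [Measure.prod_restrict]
        exact (hFcont.integrableOn_compact (isCompact_Icc.prod hTcomp)).mono_set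
          (Set.prod_mono Set.Ioo_subset_Icc_self subset_rfl)
      have step6 : (∫ u in Set.Ioo (0:ℝ) 1, ∫ y in T,
              ((1-u)^n : ℝ) • (1 / (((u:ℂ) * A 0 + (1 - (u:ℂ)) * L y) ^ (n+1+1))))
          = ∫ y in T, ∫ u in Set.Ioo (0:ℝ) 1,
              ((1-u)^n : ℝ) • (1 / (((u:ℂ) * A 0 + (1 - (u:ℂ)) * L y) ^ (n+1+1))) := by
        have h1 := integral_prod F hFint
        have h2 := integral_prod_symm F hFint
        exact h1.symm.trans h2
      have step7 : ∀ y ∈ T,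
          (∫ u in Set.Ioo (0:ℝ) 1,
            ((1-u)^n : ℝ) • (1 / (((u:ℂ) * A 0 + (1 - (u:ℂ)) * L y) ^ (n+1+1))))
          = 1 / (((n:ℂ)+1) * A 0 * (L y)^(n+1)) := by
        intro y hy
        rw [← integral_Ioc_eq_integral_Ioo,
          ← intervalIntegral.integral_of_le (zero_le_one (α := ℝ))]
        rw [← lemB' n hA0 (hLre y hy)]
        apply intervalIntegral.integral_congr
        intro u _
        simp only [Complex.real_smul, mul_one_div]
        norm_cast
      have ihA : (1:ℂ) / ∏ i : Fin (n+1), A i.succ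
          = (n.factorial : ℂ) * ∫ y in T, 1 / (L y)^(n+1) :=
        ih (fun i => A i.succ) (fun i => hA _)
      have step8 : ∫ x in S, g x
          = (1/(((n:ℂ)+1) * A 0)) * ∫ y in T, 1/(L y)^(n+1) := by
        rw [step5, step6]
        rw [setIntegral_congr_fun hTm (fun y hy => step7 y hy)]
        have hsplit : ∀ y : Fin n → ℝ,
            1 / (((n:ℂ)+1) * A 0 * (L y)^(n+1))
              = (1/(((n:ℂ)+1) * A 0)) * (1/((L y)^(n+1))) := by
          intro y
          rw [div_mul_div_comm, one_mul]
        simp only [hsplit]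
        rw [integral_const_mul]
      rw [step8]
      have hfacne : (n.factorial : ℂ) ≠ 0 := Nat.cast_ne_zero.mpr n.factorial_ne_zero
      have hn1 : ((n:ℂ)+1) ≠ 0 := by
        exact_mod_cast Nat.cast_add_one_ne_zero (n := n) (R := ℂ)
      have hprodne : ∏ i : Fin (n+1), A i.succ ≠ 0 :=
        Finset.prod_ne_zero_iff.mpr fun i _ => by
          intro h
          have := hA i.succ
          rw [h] at this
          simp at this
      have hXdef : ∫ y in T, 1/(L y)^(n+1)
          = (1/(n.factorial:ℂ)) * (1 / ∏ i : Fin (n+1), A i.succ) := by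
        rw [ihA]
        field_simp
      rw [hXdef, Fin.prod_univ_succ]
      have hfact : (((n+1).factorial : ℕ) : ℂ) = ((n:ℂ)+1) * (n.factorial : ℂ) := by
        rw [Nat.factorial_succ]; push_cast; ring
      rw [hfact]
      field_simp
end

section
/- For a complex number u with |Arg(u)| < π (i.e., u not a nonpositive real) and a real number α > 1/2, ∫_0^∞ dx/(1 + u x^2)^α = (1/(2√u)) · B(1/2, α - 1/2), where √u denotes the principal square root and B is the Beta function. -/
open MeasureTheory Set Complex Metric

lemma mem_sp (u : ℂ) (hu : u ∈ Complex.slitPlane) (x : ℝ) : 1 + u * (x:ℂ)^2 ∈ Complex.slitPlane := by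
  have hx : ((x:ℂ)^2) = ((x^2 : ℝ) : ℂ) := by push_cast; ring
  rw [Complex.mem_slitPlane_iff] at hu ⊢
  rcases eq_or_ne x 0 with h | h
  · simp [h]
  rcases hu with h1 | h1
  · left
    simp only [hx, Complex.add_re, Complex.one_re, Complex.mul_re, Complex.ofReal_re,
      Complex.ofReal_im, mul_zero, sub_zero]
    positivity
  · right
    simp only [hx, Complex.add_im, Complex.one_im, Complex.mul_im, Complex.ofReal_re,
      Complex.ofReal_im, mul_zero, zero_add]
    positivity

lemma lower_bd {K : Set ℂ} (hK : IsCompact K) (hKne : K.Nonempty)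
    (hKs : K ⊆ Complex.slitPlane) :
    ∃ c > 0, ∀ u ∈ K, ∀ x : ℝ, c * (1 + x^2) ≤ ‖1 + u * (x:ℂ)^2‖ := by
  set g : ℂ × ℝ → ℝ := fun p => ‖(1 - (p.2:ℂ)) + p.1 * (p.2:ℂ)‖ with hg
  have hcont : ContinuousOn g (K ×ˢ Icc (0:ℝ) 1) := Continuous.continuousOn (by continuity)
  have hcomp : IsCompact (K ×ˢ Icc (0:ℝ) 1) := hK.prod isCompact_Icc
  have hne : (K ×ˢ Icc (0:ℝ) 1).Nonempty := hKne.prod ⟨0, by norm_num⟩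
  obtain ⟨⟨u₀, y₀⟩, hmem, hmin⟩ := hcomp.exists_isMinOn hne hcont
  have hpos : 0 < g (u₀, y₀) := by
    rw [hg]
    simp only [norm_pos_iff]
    intro h0
    have hy₀ : y₀ ∈ Icc (0:ℝ) 1 := hmem.2
    have hu₀ : u₀ ∈ Complex.slitPlane := hKs hmem.1
    rcases eq_or_lt_of_le hy₀.1 with h | h
    · rw [← h] at h0; simp at h0
    · have hy : (y₀ : ℂ) ≠ 0 := by exact_mod_cast h.ne'
      have hval : u₀ = (((y₀ - 1)/y₀ : ℝ) : ℂ) := by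
        push_cast
        rw [eq_div_iff hy]
        linear_combination h0
      rw [Complex.mem_slitPlane_iff, hval] at hu₀
      simp only [Complex.ofReal_re, Complex.ofReal_im, ne_eq, not_true_eq_false, or_false] at hu₀
      have : (y₀ - 1)/y₀ ≤ 0 := div_nonpos_of_nonpos_of_nonneg (by linarith [hy₀.2]) hy₀.1
      linarith
  refine ⟨g (u₀, y₀), hpos, fun u hu x => ?_⟩
  have hx1 : (0:ℝ) < 1 + x^2 := by positivity
  have hy : x^2/(1+x^2) ∈ Icc (0:ℝ) 1 := by
    constructor
    · positivity
    · rw [div_le_one hx1]; nlinarith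
  have h3 : g (u₀, y₀) ≤ g (u, x^2/(1+x^2)) := hmin (Set.mk_mem_prod hu hy)
  have hcx : ((1:ℂ) + (x:ℂ)^2) ≠ 0 := by
    have : ((1:ℂ) + (x:ℂ)^2) = (((1+x^2:ℝ)):ℂ) := by push_cast; ring
    rw [this]
    exact_mod_cast hx1.ne'
  have heq : (1 - ((x^2/(1+x^2):ℝ):ℂ)) + u * ((x^2/(1+x^2):ℝ):ℂ)
      = (((1+x^2)⁻¹ : ℝ):ℂ) * (1 + u * (x:ℂ)^2) := by
    push_cast
    field_simp
    ring
  have key : g (u, x^2/(1+x^2)) = (1+x^2)⁻¹ * ‖1 + u * (x:ℂ)^2‖ := by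
    show ‖(1 - ((x^2/(1+x^2):ℝ):ℂ)) + u * ((x^2/(1+x^2):ℝ):ℂ)‖ = _
    rw [heq, norm_mul]
    congr 1
    rw [Complex.norm_real, Real.norm_eq_abs, abs_of_pos (inv_pos.mpr hx1)]
  rw [key, inv_mul_eq_div, le_div_iff₀ hx1] at h3
  linarith

lemma real_id (t s α : ℝ) (ht : 0 < t) (hs : 0 < s) (hs1 : s < 1) :
    (1/(2*Real.sqrt ((1-s)/(t*s)))) * (1/(t*s^2)) * s^α
      = (Real.sqrt t)⁻¹/2 * (s^(α - 3/2) * (1-s)^(-(1/2):ℝ)) := by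
  have h1s : (0:ℝ) < 1 - s := by linarith
  have hsa : Real.sqrt ((1-s)/(t*s)) = Real.sqrt (1-s) / (Real.sqrt t * Real.sqrt s) := by
    rw [Real.sqrt_div h1s.le, Real.sqrt_mul ht.le]
  have hsplit : s^α = s^(α - 3/2) * (s * Real.sqrt s) := by
    rw [Real.sqrt_eq_rpow,
      show s * s ^ ((1:ℝ)/2) = s ^ (1 + (1:ℝ)/2) by rw [Real.rpow_add hs, Real.rpow_one],
      ← Real.rpow_add hs]
    norm_num
  have hneg : (1-s)^(-(1/2):ℝ) = (Real.sqrt (1-s))⁻¹ := by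
    rw [Real.rpow_neg h1s.le, Real.sqrt_eq_rpow]
  rw [hsa, hsplit, hneg]
  have ha : (0:ℝ) < Real.sqrt s := Real.sqrt_pos.mpr hs
  have hb : (0:ℝ) < Real.sqrt (1-s) := Real.sqrt_pos.mpr h1s
  have hc : (0:ℝ) < Real.sqrt t := Real.sqrt_pos.mpr ht
  have has : Real.sqrt s ^ 2 = s := Real.sq_sqrt hs.le
  have hct : Real.sqrt t ^ 2 = t := Real.sq_sqrt ht.le
  field_simp
  ring_nf
  rw [has, hct]
  ring

lemma base_case (α : ℝ) (t : ℝ) (ht : 0 < t) :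
    ∫ x in Ioi (0:ℝ), ((1 + (t:ℂ) * (x:ℂ)^2) ^ (-(α:ℂ)))
      = (((Real.sqrt t)⁻¹/2 : ℝ) : ℂ) * Complex.betaIntegral ((α:ℂ) - 1/2) (1/2) := by
  set f : ℝ → ℝ := fun s => Real.sqrt ((1-s)/(t*s)) with hf
  set F : ℝ → ℝ := fun s => (1/(2*Real.sqrt ((1-s)/(t*s)))) * (-(1/(t*s^2))) with hF
  have hq : ∀ s ∈ Ioo (0:ℝ) 1, (0:ℝ) < (1-s)/(t*s) := by
    intro s hs
    exact div_pos (by linarith [hs.2]) (by have := hs.1; positivity)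
  have hderiv : ∀ s ∈ Ioo (0:ℝ) 1, HasDerivWithinAt f (F s) (Ioo (0:ℝ) 1) s := by
    intro s hs
    have hs0 : (0:ℝ) < s := hs.1
    have hts : t * s ≠ 0 := by positivity
    have hqd : HasDerivAt (fun s => (1-s)/(t*s)) (-(1/(t*s^2))) s := by
      have h1 : HasDerivAt (fun s : ℝ => 1-s) (-1) s := by
        simpa using (hasDerivAt_id s).const_sub 1
      have h2 : HasDerivAt (fun s : ℝ => t*s) t s := by
        simpa using (hasDerivAt_id s).const_mul t
      have := h1.div h2 hts
      refine this.congr_deriv ?_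
      field_simp
      ring
    have := (Real.hasDerivAt_sqrt (hq s hs).ne').comp s hqd
    exact this.hasDerivWithinAt
  have hinj : InjOn f (Ioo (0:ℝ) 1) := by
    intro a ha b hb h
    have hqa := hq a ha
    have hqb := hq b hb
    have : (1-a)/(t*a) = (1-b)/(t*b) := by
      rwa [hf, Real.sqrt_inj hqa.le hqb.le] at h
    have ha0 : (0:ℝ) < t*a := by have := ha.1; positivity
    have hb0 : (0:ℝ) < t*b := by have := hb.1; positivity
    field_simp at this
    rw [div_eq_div_iff ha.1.ne' hb.1.ne'] at this
    nlinarith [ht, ha.1, hb.1]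
  have himg : f '' Ioo (0:ℝ) 1 = Ioi (0:ℝ) := by
    apply Subset.antisymm
    · rintro x ⟨s, hs, rfl⟩
      exact Real.sqrt_pos.mpr (hq s hs)
    · intro x hx
      have hx0 : (0:ℝ) < x := hx
      have hd : (0:ℝ) < 1 + t*x^2 := by positivity
      refine ⟨1/(1+t*x^2), ⟨by positivity, ?_⟩, ?_⟩
      · rw [div_lt_one hd]
        have : 0 < t*x^2 := by positivity
        linarith
      · rw [hf]
        have : (1 - 1/(1+t*x^2))/(t*(1/(1+t*x^2))) = x^2 := by
          field_simp
          ring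
        simp only [this]
        exact Real.sqrt_sq hx0.le
  rw [← himg, integral_image_eq_integral_abs_deriv_smul measurableSet_Ioo hderiv hinj]
  rw [Complex.betaIntegral, intervalIntegral.integral_of_le zero_le_one,
    MeasureTheory.integral_Ioc_eq_integral_Ioo, ← MeasureTheory.integral_const_mul]
  apply setIntegral_congr_fun measurableSet_Ioo
  intro s hs
  have hs0 : (0:ℝ) < s := hs.1
  have hs1 : s < 1 := hs.2
  have h1s : (0:ℝ) < 1 - s := by linarith
  have hq' := hq s hs
  -- base value
  have hfs2 : f s ^ 2 = (1-s)/(t*s) := Real.sq_sqrt hq'.le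
  have hre : 1 + t * (f s)^2 = s⁻¹ := by
    rw [hfs2]; field_simp
    ring
  have hbase : (1:ℂ) + (t:ℂ) * ((f s : ℝ):ℂ)^2 = ((s⁻¹ : ℝ) : ℂ) := by
    rw [← hre]; push_cast; ring
  have hcpow : ((1:ℂ) + (t:ℂ) * ((f s : ℝ):ℂ)^2) ^ (-(α:ℂ)) = ((s ^ α : ℝ) : ℂ) := by
    rw [hbase, show (-(α:ℂ)) = ((-α : ℝ) : ℂ) by push_cast; ring,
      ← Complex.ofReal_cpow (inv_nonneg.mpr hs0.le)]
    congr 1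
    rw [Real.inv_rpow hs0.le, Real.rpow_neg hs0.le, inv_inv]
  have habs : |F s| = (1/(2*Real.sqrt ((1-s)/(t*s)))) * (1/(t*s^2)) := by
    rw [hF]
    rw [abs_mul, abs_neg]
    rw [abs_of_pos, abs_of_pos]
    · positivity
    · have := Real.sqrt_pos.mpr hq'
      positivity
  calc |F s| • ((1:ℂ) + (t:ℂ) * ((f s : ℝ):ℂ)^2) ^ (-(α:ℂ))
      = (( |F s| * s ^ α : ℝ) : ℂ) := by
        rw [hcpow, Complex.real_smul, ← Complex.ofReal_mul]
    _ = (((Real.sqrt t)⁻¹/2 * (s^(α - 3/2) * (1-s)^(-(1/2):ℝ)) : ℝ) : ℂ) := by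
        rw [habs, real_id t s α ht hs0 hs1]
    _ = _ := by
        have e1 : ((α:ℂ) - 1/2 - 1) = ((α - 3/2 : ℝ):ℂ) := by push_cast; ring
        have e2 : ((1:ℂ)/2 - 1) = ((-(1/2) : ℝ):ℂ) := by push_cast; ring
        have e3 : (1 - (s:ℂ)) = ((1 - s : ℝ):ℂ) := by push_cast; ring
        beta_reduce
        rw [Complex.ofReal_mul, Complex.ofReal_mul, e1, e3, e2,
          ← Complex.ofReal_cpow hs0.le, ← Complex.ofReal_cpow h1s.le]

lemma integrable_aux_s3 {α : ℝ} (hα : 1/2 < α) :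
    IntegrableOn (fun x : ℝ => (1+x^2)^(-α)) (Ioi (0:ℝ)) := by
  have h2 : Integrable (fun x : ℝ => (2:ℝ)^α * (1+‖x‖)^(-(2*α))) := by
    apply Integrable.const_mul
    apply integrable_one_add_norm (E := ℝ)
    rw [Module.finrank_self]
    norm_num; linarith
  apply IntegrableOn.mono_set _ (subset_univ _)
  rw [← integrableOn_univ] at h2
  apply h2.mono'
  · apply Continuous.aestronglyMeasurable
    apply Continuous.rpow_const (by continuity)
    intro x; left; positivity
  · refine ae_of_all _ fun x => ?_
    have h1 : (0:ℝ) < 1 + x^2 := by positivity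
    rw [Real.norm_eq_abs, abs_of_pos (Real.rpow_pos_of_pos h1 _)]
    have hsq : (1+‖x‖)^(2:ℕ) ≤ 2*(1+x^2) := by
      rw [Real.norm_eq_abs]
      nlinarith [abs_nonneg x, _root_.sq_abs x, sq_nonneg (|x|-1)]
    calc (1+x^2)^(-α) ≤ ((1+‖x‖)^(2:ℕ)/2)^(-α) := by
          apply Real.rpow_le_rpow_of_nonpos (by positivity) (by linarith) (by linarith)
      _ = (2:ℝ)^α * (1+‖x‖)^(-(2*α)) := by
          rw [Real.div_rpow (by positivity) (by norm_num), ← Real.rpow_natCast (1+‖x‖) 2,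
            ← Real.rpow_mul (by positivity), Real.rpow_neg (by norm_num : (0:ℝ) ≤ 2),
            div_inv_eq_mul]
          push_cast
          ring_nf

lemma norm_integrand (u : ℂ) (x : ℝ) (r : ℝ) :
    ‖(1 + u * (x:ℂ)^2) ^ ((r:ℝ):ℂ)‖ = ‖1 + u * (x:ℂ)^2‖ ^ r := by
  rw [Complex.norm_cpow_real]

lemma cont_integrand (u : ℂ) (hu : u ∈ Complex.slitPlane) (c : ℂ) :
    Continuous (fun x : ℝ => (1 + u * (x:ℂ)^2) ^ c) := by
  apply Continuous.cpow (by continuity) continuous_const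
  exact fun x => mem_sp u hu x

lemma diffF {α : ℝ} (hα : 1/2 < α) {u₀ : ℂ} (hu₀ : u₀ ∈ Complex.slitPlane) :
    DifferentiableAt ℂ (fun u => ∫ x in Ioi (0:ℝ), (1 + u * (x:ℂ)^2)^(-(α:ℂ))) u₀ := by
  have hα0 : (0:ℝ) < α := by linarith
  obtain ⟨δ, hδ, hsub⟩ := Metric.isOpen_iff.mp Complex.isOpen_slitPlane u₀ hu₀
  set ε := δ/2 with hε
  have hεpos : 0 < ε := by positivity
  have hball : closedBall u₀ ε ⊆ Complex.slitPlane :=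
    (Metric.closedBall_subset_ball (by simp [hε]; linarith)).trans hsub
  obtain ⟨c, hc, hbd⟩ := lower_bd (isCompact_closedBall u₀ ε)
    ⟨u₀, Metric.mem_closedBall_self hεpos.le⟩ hball
  set F' : ℂ → ℝ → ℂ := fun u x => -(α:ℂ) * (1 + u*(x:ℂ)^2)^(-(α:ℂ)-1) * ((x:ℂ))^2 with hF'
  set bound : ℝ → ℝ := fun x => α * c^(-α-1) * (1+x^2)^(-α) with hbound
  have h1x : ∀ x : ℝ, (0:ℝ) < 1 + x^2 := fun x => by positivity
  -- norm bound on the derivative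
  have key : ∀ u ∈ closedBall u₀ ε, ∀ x : ℝ, ‖F' u x‖ ≤ bound x := by
    intro u hu x
    have hmem := hbd u hu x
    have habs : ‖1 + u*(x:ℂ)^2‖ ^ (-α-1) ≤ (c * (1+x^2))^(-α-1) := by
      apply Real.rpow_le_rpow_of_nonpos (by positivity) hmem (by linarith)
    have hcast : (-(α:ℂ)-1) = (((-α-1 : ℝ)):ℂ) := by push_cast; ring
    rw [hF']
    simp only [norm_mul, norm_neg, norm_pow]
    rw [hcast, Complex.norm_cpow_real]
    simp only [Complex.norm_real, Real.norm_eq_abs, Complex.norm_natCast]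
    calc |α| * ‖1 + u*(x:ℂ)^2‖ ^ (-α-1) * |x| ^ 2
        ≤ α * ((c * (1+x^2))^(-α-1)) * (1+x^2) := by
          apply mul_le_mul
          · apply mul_le_mul _ habs (by positivity) hα0.le
            simp [abs_of_pos hα0]
          · rw [_root_.sq_abs]; nlinarith [sq_nonneg x]
          · positivity
          · positivity
      _ = bound x := by
          rw [hbound, Real.mul_rpow hc.le (h1x x).le]
          have : (1+x^2)^(-α-1) * (1+x^2) = (1+x^2)^(-α) := by
            nth_rewrite 2 [← Real.rpow_one (1+x^2)]
            rw [← Real.rpow_add (h1x x)]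
            ring_nf
          beta_reduce
          linear_combination α * c^(-α-1) * this
  -- integrability of the value at u₀
  have hint : Integrable (fun x : ℝ => (1 + u₀*(x:ℂ)^2)^(-(α:ℂ)))
      (volume.restrict (Ioi (0:ℝ))) := by
    apply Integrable.mono' (((integrable_aux_s3 hα).const_mul (c^(-α))))
    · exact ((cont_integrand u₀ hu₀ _).aestronglyMeasurable)
    · refine ae_of_all _ fun x => ?_
      have hcast : (-(α:ℂ)) = (((-α : ℝ)):ℂ) := by push_cast; ring
      rw [hcast, norm_integrand]
      calc ‖1 + u₀*(x:ℂ)^2‖ ^ (-α) ≤ (c * (1+x^2))^(-α) := by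
            apply Real.rpow_le_rpow_of_nonpos (by positivity)
              (hbd u₀ (Metric.mem_closedBall_self hεpos.le) x) (by linarith)
        _ = c^(-α) * (1+x^2)^(-α) := Real.mul_rpow hc.le (h1x x).le
  have main := hasDerivAt_integral_of_dominated_loc_of_deriv_le (Metric.ball_mem_nhds u₀ hεpos)
    (F := fun u (x : ℝ) => (1 + u*(x:ℂ)^2)^(-(α:ℂ))) (F' := F')
    (bound := bound) (μ := volume.restrict (Ioi (0:ℝ)))
    ?_ hint ?_ ?_ ?_ ?_
  · exact main.2.differentiableAt
  · filter_upwards [Complex.isOpen_slitPlane.eventually_mem hu₀] with u hu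
    exact (cont_integrand u hu _).aestronglyMeasurable
  · exact ((continuous_const.mul (cont_integrand u₀ hu₀ (-(α:ℂ)-1))).mul
      (by continuity)).aestronglyMeasurable
  · exact ae_of_all _ fun x u hu => key u (Metric.ball_subset_closedBall hu) x
  · exact (integrable_aux_s3 hα).const_mul _
  · refine ae_of_all _ fun x u hu => ?_
    have hmem : (1 : ℂ) + u * (x:ℂ)^2 ∈ Complex.slitPlane :=
      mem_sp u (hball (Metric.ball_subset_closedBall hu)) x
    have hd : HasDerivAt (fun u : ℂ => 1 + u * (x:ℂ)^2) ((x:ℂ)^2) u := by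
      simpa using ((hasDerivAt_id u).mul_const ((x:ℂ)^2)).const_add 1
    simpa using hd.cpow_const hmem

theorem gr_3_194_3 (u : ℂ) (hu : ¬(u.im = 0 ∧ u.re ≤ 0)) (α : ℝ) (hα : 1/2 < α) :
    ∫ x in Set.Ioi (0:ℝ), ((1 + u * (x:ℂ)^2) ^ (-(α:ℂ))) =
      1 / (2 * u ^ ((1:ℂ)/2)) *
        (Complex.Gamma (1/2) * Complex.Gamma ((α:ℂ) - 1/2) / Complex.Gamma (α:ℂ)) := by
  have h_u : u ∈ Complex.slitPlane := by
    rw [Complex.mem_slitPlane_iff]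
    push_neg at hu
    rcases eq_or_ne u.im 0 with h | h
    · exact Or.inl (hu h)
    · exact Or.inr h
  set C : ℂ := Complex.Gamma (1/2) * Complex.Gamma ((α:ℂ) - 1/2) / Complex.Gamma (α:ℂ) with hC
  set F : ℂ → ℂ := fun u => ∫ x in Ioi (0:ℝ), (1 + u * (x:ℂ)^2)^(-(α:ℂ)) with hF
  set G : ℂ → ℂ := fun u => 1 / (2 * u ^ ((1:ℂ)/2)) * C with hG
  -- beta integral value
  have hΓ : Complex.Gamma (α:ℂ) ≠ 0 := by
    apply Complex.Gamma_ne_zero_of_re_pos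
    simp only [Complex.ofReal_re]
    linarith
  have hβ : Complex.betaIntegral ((α:ℂ) - 1/2) (1/2) = C := by
    have hs : 0 < Complex.re ((α:ℂ) - 1/2) := by
      simp only [Complex.sub_re, Complex.ofReal_re, Complex.div_re]
      norm_num
      linarith
    have ht2 : 0 < Complex.re (1/2 : ℂ) := by norm_num
    have h := Complex.Gamma_mul_Gamma_eq_betaIntegral hs ht2
    rw [show ((α:ℂ) - 1/2) + 1/2 = (α:ℂ) by ring] at h
    rw [hC, eq_div_iff hΓ]
    linear_combination -h
  -- equality on the positive real axis
  have hreal : ∀ t : ℝ, 0 < t → F ((t:ℝ):ℂ) = G ((t:ℝ):ℂ) := by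
    intro t ht
    have hsq : ((t:ℂ)) ^ ((1:ℂ)/2) = ((Real.sqrt t : ℝ) : ℂ) := by
      rw [Real.sqrt_eq_rpow, Complex.ofReal_cpow ht.le]
      norm_num
    have hsqne : Real.sqrt t ≠ 0 := (Real.sqrt_pos.mpr ht).ne'
    rw [hF, hG]
    beta_reduce
    rw [base_case α t ht, hβ, hsq]
    congr 1
    push_cast
    field_simp
  -- analyticity
  have hFan : AnalyticOnNhd ℂ F Complex.slitPlane := by
    apply DifferentiableOn.analyticOnNhd _ Complex.isOpen_slitPlane
    exact fun z hz => (diffF hα hz).differentiableWithinAt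
  have hGan : AnalyticOnNhd ℂ G Complex.slitPlane := by
    intro z hz
    have hzne : (2:ℂ) * z ^ ((1:ℂ)/2) ≠ 0 := by
      apply mul_ne_zero two_ne_zero
      simp only [ne_eq, Complex.cpow_eq_zero_iff, not_and_or, not_not]
      exact Or.inl (Complex.slitPlane_ne_zero hz)
    exact (analyticAt_const.div (analyticAt_const.mul
      ((analyticAt_id).cpow analyticAt_const hz)) hzne).mul analyticAt_const
  -- preconnectedness of slit plane
  have hpre : IsPreconnected Complex.slitPlane := by
    apply isPreconnected_of_forall (1:ℂ)
    intro y hy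
    exact ⟨segment ℝ 1 y, Complex.starConvex_one_slitPlane.segment_subset hy,
      left_mem_segment _ _ _, right_mem_segment _ _ _, (convex_segment _ _).isPreconnected⟩
  -- frequently equal near 1
  have hfreq : ∃ᶠ z in nhdsWithin (1:ℂ) {(1:ℂ)}ᶜ, F z = G z := by
    have htend : Filter.Tendsto (fun n : ℕ => ((1 + ((n:ℝ)+1)⁻¹ : ℝ) : ℂ)) Filter.atTop
        (nhdsWithin (1:ℂ) {(1:ℂ)}ᶜ) := by
      apply tendsto_nhdsWithin_of_tendsto_nhds_of_eventually_within
      · have h1 : Filter.Tendsto (fun n : ℕ => (1 + ((n:ℝ)+1)⁻¹ : ℝ)) Filter.atTop (nhds 1) := by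
          have := tendsto_one_div_add_atTop_nhds_zero_nat (𝕜 := ℝ)
          simp only [one_div] at this
          simpa using tendsto_const_nhds.add this
        have h2 := (Complex.continuous_ofReal.tendsto (1:ℝ)).comp h1
        rw [Complex.ofReal_one] at h2
        exact h2
      · apply Filter.Eventually.of_forall
        intro n
        simp only [mem_compl_iff, mem_singleton_iff]
        intro hcontra
        have : (1 + ((n:ℝ)+1)⁻¹ : ℝ) = 1 := by exact_mod_cast hcontra
        have hn : (0:ℝ) < ((n:ℝ)+1)⁻¹ := by positivity
        linarith
    apply htend.frequently
    apply Filter.Frequently.of_forall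
    intro n
    exact hreal _ (by positivity)
  have heq := hFan.eqOn_of_preconnected_of_frequently_eq hGan hpre
    Complex.one_mem_slitPlane hfreq h_u
  exact heq
end

section
/- For real t with 0 ≤ t < 1, ₂F₁(9/4, 3/4; 5/2; t) = 2√2 (3 + 2√(1-t)) / (5 (1 + √(1-t))^(3/2) · √(1-t)). -/
/-- The Gauss hypergeometric series ₂F₁(a,b;c;x). -/
noncomputable def hyp2F1 (a b c x : ℝ) : ℝ :=
  ∑' k : ℕ, (ascPochhammer ℝ k).eval a * (ascPochhammer ℝ k).eval b /
      ((ascPochhammer ℝ k).eval c * (Nat.factorial k)) * x^k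

open Filter Topology

/-- coefficients of `(1-x)^(-1/2)`: `p m = (1/2)_m / m!`. -/
noncomputable def pc : ℕ → ℝ
  | 0 => 1
  | m + 1 => pc m * (2 * m + 1) / (2 * m + 2)

lemma pc_pos (m : ℕ) : 0 < pc m := by
  induction m with
  | zero => norm_num [pc]
  | succ m ih =>
      rw [pc]
      positivity

lemma pc_le_one (m : ℕ) : pc m ≤ 1 := by
  induction m with
  | zero => norm_num [pc]
  | succ m ih =>
      rw [pc, div_le_one (by positivity)]
      nlinarith [pc_pos m]

lemma pc_rec (m : ℕ) : (2 * (m:ℝ) + 2) * pc (m+1) = (2 * m + 1) * pc m := by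
  rw [pc]; field_simp

noncomputable def pSum (x : ℝ) : ℝ := ∑' m, pc m * x ^ m

lemma summable_pc {x : ℝ} (hx : |x| < 1) : Summable (fun m => pc m * x ^ m) := by
  apply Summable.of_norm_bounded (summable_geometric_of_lt_one (abs_nonneg x) hx)
  intro m
  rw [norm_mul, norm_pow, Real.norm_eq_abs, Real.norm_eq_abs,
    abs_of_pos (pc_pos m)]
  calc pc m * |x| ^ m ≤ 1 * |x| ^ m := by
        gcongr; exact pc_le_one m
    _ = |x| ^ m := one_mul _

lemma summable_deriv_bound {r : ℝ} (hr0 : 0 < r) (hr : r < 1) :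
    Summable (fun m : ℕ => (m : ℝ) * r ^ (m - 1)) := by
  rw [← summable_nat_add_iff 1]
  have h1 : Summable (fun m : ℕ => (m : ℝ) ^ 1 * r ^ m) :=
    summable_pow_mul_geometric_of_norm_lt_one 1 (by rwa [Real.norm_eq_abs, abs_of_pos hr0])
  have h2 : Summable (fun m : ℕ => r ^ m) := summable_geometric_of_lt_one hr0.le hr
  have := (h1.add h2)
  apply this.congr
  intro m
  push_cast [Nat.add_sub_cancel]
  ring

lemma hasDerivAt_pSum {x : ℝ} (hx : |x| < 1) :
    HasDerivAt pSum (∑' m, pc m * ((m : ℝ) * x ^ (m - 1))) x := by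
  set r : ℝ := (|x| + 1) / 2 with hr
  have hr0 : 0 < r := by positivity
  have hr1 : r < 1 := by rw [hr]; linarith
  have hxr : |x| < r := by rw [hr]; linarith
  exact hasDerivAt_tsum_of_isPreconnected (summable_deriv_bound hr0 hr1)
    (Metric.isOpen_ball) (Convex.isPreconnected (convex_ball (0:ℝ) r))
    (fun m y _ => (hasDerivAt_pow m y).const_mul (pc m))
    (fun m y hy => by
      have hy' : |y| < r := by simpa [Real.ball_eq_Ioo, abs_lt] using hy
      rw [Real.norm_eq_abs, abs_mul, abs_mul, abs_of_pos (pc_pos m), abs_of_nonneg (by positivity : (0:ℝ) ≤ (m:ℝ)), abs_pow]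
      have h1 : (m:ℝ) * |y| ^ (m-1) ≤ (m:ℝ) * r ^ (m-1) := by
        gcongr
      calc pc m * ((m:ℝ) * |y| ^ (m-1)) ≤ 1 * ((m:ℝ) * r ^ (m-1)) :=
            mul_le_mul (pc_le_one m) h1 (by positivity) one_pos.le
        _ = (m:ℝ) * r ^ (m-1) := one_mul _)
    (by simp [Metric.mem_ball, hr0] : (0:ℝ) ∈ Metric.ball (0:ℝ) r)
    (by simpa using summable_pc (by norm_num : |(0:ℝ)| < 1))
    (by simpa [Metric.mem_ball, Real.dist_eq] using hxr)

noncomputable def pDeriv (x : ℝ) : ℝ := ∑' m, pc m * ((m : ℝ) * x ^ (m - 1))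

lemma summable_pc_deriv {x : ℝ} (hx : |x| < 1) :
    Summable (fun m => pc m * ((m : ℝ) * x ^ (m - 1))) := by
  set r : ℝ := (|x| + 1) / 2 with hr
  have hr0 : 0 < r := by positivity
  have hr1 : r < 1 := by rw [hr]; linarith
  have hxr : |x| < r := by rw [hr]; linarith
  apply Summable.of_norm_bounded (summable_deriv_bound hr0 hr1)
  intro m
  rw [Real.norm_eq_abs, abs_mul, abs_mul, abs_of_pos (pc_pos m),
    abs_of_nonneg (by positivity : (0:ℝ) ≤ (m:ℝ)), abs_pow]
  have h1 : (m:ℝ) * |x| ^ (m-1) ≤ (m:ℝ) * r ^ (m-1) := by gcongr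
  calc pc m * ((m:ℝ) * |x| ^ (m-1)) ≤ 1 * ((m:ℝ) * r ^ (m-1)) :=
        mul_le_mul (pc_le_one m) h1 (by positivity) one_pos.le
    _ = (m:ℝ) * r ^ (m-1) := one_mul _

lemma hasSum_pc_deriv_shift {x : ℝ} (hx : |x| < 1) :
    HasSum (fun m => pc (m+1) * (((m:ℝ) + 1) * x ^ m)) (pDeriv x) := by
  have h := (summable_pc_deriv hx).hasSum
  have hinj : Function.Injective (fun m : ℕ => m + 1) := fun a b h => by simpa using h
  rw [show (fun m => pc (m+1) * (((m:ℝ) + 1) * x ^ m)) =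
      (fun m : ℕ => pc m * ((m : ℝ) * x ^ (m - 1))) ∘ (fun m : ℕ => m + 1) by
    funext m; simp [Function.comp]]
  rw [Function.Injective.hasSum_iff hinj]
  · exact h
  · intro m hm
    have : m = 0 := by
      by_contra h0
      exact hm ⟨m - 1, by simp; omega⟩
    simp [this]

lemma pSum_ode {x : ℝ} (hx : |x| < 1) : 2 * (1 - x) * pDeriv x = pSum x := by
  have hP : HasSum (fun m => pc m * x ^ m) (pSum x) := (summable_pc hx).hasSum
  have hD := hasSum_pc_deriv_shift hx
  have hxD : HasSum (fun m : ℕ => 2 * (m:ℝ) * pc m * x ^ m) (2 * x * pDeriv x) := by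
    have h := hD.mul_left (2 * x)
    have hinj : Function.Injective (fun m : ℕ => m + 1) := fun a b h => by simpa using h
    rw [show (fun m => 2 * x * (pc (m+1) * (((m:ℝ) + 1) * x ^ m))) =
        (fun m : ℕ => 2 * (m:ℝ) * pc m * x ^ m) ∘ (fun m : ℕ => m + 1) by
      funext m; simp [Function.comp]; ring_nf] at h
    rw [Function.Injective.hasSum_iff hinj] at h
    · exact h
    · intro m hm
      have : m = 0 := by
        by_contra h0
        exact hm ⟨m - 1, by simp; omega⟩
      simp [this]
  have hcomb := ((hD.mul_left 2).sub hxD).sub hP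
  have hzero : (fun m => 2 * (pc (m+1) * (((m:ℝ) + 1) * x ^ m))
      - 2 * (m:ℝ) * pc m * x ^ m - pc m * x ^ m) = fun _ => (0:ℝ) := by
    funext m
    have h := pc_rec m
    linear_combination x ^ m * h
  rw [hzero] at hcomb
  have := hasSum_zero.unique hcomb
  linarith [this]

lemma pSum_zero : pSum 0 = 1 := by
  unfold pSum
  rw [tsum_eq_single 0 (fun m hm => by
    cases m with
    | zero => simp at hm
    | succ m => simp)]
  simp [pc]

lemma pSum_sq {x : ℝ} (hx : |x| < 1) : (pSum x) ^ 2 * (1 - x) = 1 := by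
  set r : ℝ := (|x| + 1) / 2 with hr
  have hr0 : 0 < r := by positivity
  have hr1 : r < 1 := by rw [hr]; linarith [abs_nonneg x]
  have hxr : |x| < r := by rw [hr]; linarith
  have hball : ∀ y ∈ Metric.ball (0:ℝ) r,
      HasDerivWithinAt (fun y => (pSum y) ^ 2 * (1 - y)) 0 (Metric.ball (0:ℝ) r) y := by
    intro y hy
    have hy1 : |y| < 1 := by
      rw [Metric.mem_ball, Real.dist_eq, sub_zero] at hy
      linarith
    have hf := hasDerivAt_pSum hy1
    have h1 : HasDerivAt (fun y => (pSum y) ^ 2) (2 * pSum y ^ 1 * pDeriv y) y := by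
      simpa [pDeriv] using hf.fun_pow 2
    have h2 : HasDerivAt (fun y : ℝ => 1 - y) (-1) y := by
      simpa using ((hasDerivAt_id y).const_sub 1)
    have h3 := h1.mul h2
    have hode := pSum_ode hy1
    have : 2 * pSum y ^ 1 * pDeriv y * (1 - y) + (pSum y) ^ 2 * (-1) = 0 := by
      have : pSum y * (2 * (1 - y) * pDeriv y) = pSum y * pSum y := by rw [hode]
      nlinarith [this]
    rw [this] at h3
    exact h3.hasDerivWithinAt
  have hconv : Convex ℝ (Metric.ball (0:ℝ) r) := convex_ball 0 r
  have hx' : x ∈ Metric.ball (0:ℝ) r := by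
    rw [Metric.mem_ball, Real.dist_eq, sub_zero]; exact hxr
  have h0' : (0:ℝ) ∈ Metric.ball (0:ℝ) r := by
    rw [Metric.mem_ball, dist_self]; exact hr0
  have := hconv.norm_image_sub_le_of_norm_hasDerivWithin_le (C := 0) hball
    (fun y _ => by simp) h0' hx'
  have heq : (pSum x) ^ 2 * (1 - x) = (pSum 0) ^ 2 * (1 - 0) := by
    have h' : ‖(pSum x) ^ 2 * (1 - x) - (pSum 0) ^ 2 * (1 - 0)‖ ≤ 0 := by
      simpa using this
    have := norm_nonneg ((pSum x) ^ 2 * (1 - x) - (pSum 0) ^ 2 * (1 - 0))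
    have : ‖(pSum x) ^ 2 * (1 - x) - (pSum 0) ^ 2 * (1 - 0)‖ = 0 := le_antisymm h' this
    rw [norm_eq_zero, sub_eq_zero] at this
    exact this
  rw [heq, pSum_zero]
  norm_num

lemma pSum_pos {x : ℝ} (hx : |x| < 1) : 0 < pSum x := by
  have hx1 : (0:ℝ) < 1 - x := by
    rw [abs_lt] at hx; linarith
  have hne : ∀ y : ℝ, |y| < 1 → pSum y ≠ 0 := by
    intro y hy hzero
    have := pSum_sq hy
    rw [hzero] at this
    norm_num at this
  by_contra hle
  push_neg at hle
  have hlt : pSum x < 0 := lt_of_le_of_ne hle (hne x hx)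
  have h0 : pSum 0 = 1 := pSum_zero
  have hcont : ∀ y : ℝ, |y| < 1 → ContinuousAt pSum y := fun y hy =>
    (hasDerivAt_pSum hy).continuousAt
  rcases lt_trichotomy x 0 with hx0 | hx0 | hx0
  · have hcont' : ContinuousOn pSum (Set.Icc x 0) := by
      intro y hy
      exact (hcont y (by rw [abs_lt] at hx ⊢; constructor <;> [linarith [hy.1]; linarith [hy.2]])).continuousWithinAt
    have hsub : Set.Icc (pSum x) (pSum 0) ⊆ pSum '' Set.Icc x 0 :=
      intermediate_value_Icc hx0.le hcont'
    have : (0:ℝ) ∈ Set.Icc (pSum x) (pSum 0) := by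
      rw [h0]; exact ⟨hlt.le, zero_le_one⟩
    obtain ⟨c, hc, hc0⟩ := hsub this
    exact hne c (by rw [abs_lt] at hx ⊢; constructor <;> [linarith [hc.1]; linarith [hc.2]]) hc0
  · rw [hx0, h0] at hlt; norm_num at hlt
  · have hcont' : ContinuousOn pSum (Set.Icc 0 x) := by
      intro y hy
      exact (hcont y (by rw [abs_lt] at hx ⊢; constructor <;> [linarith [hy.1]; linarith [hy.2]])).continuousWithinAt
    have hsub : Set.Icc (pSum x) (pSum 0) ⊆ pSum '' Set.Icc 0 x :=
      intermediate_value_Icc' hx0.le hcont'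
    have : (0:ℝ) ∈ Set.Icc (pSum x) (pSum 0) := by
      rw [h0]; exact ⟨hlt.le, zero_le_one⟩
    obtain ⟨c, hc, hc0⟩ := hsub this
    exact hne c (by rw [abs_lt] at hx ⊢; constructor <;> [linarith [hc.1]; linarith [hc.2]]) hc0

/-- The binomial series for `(1-x)^(-1/2)`. -/
lemma hasSum_pc {x : ℝ} (hx : |x| < 1) :
    HasSum (fun m => pc m * x ^ m) ((Real.sqrt (1 - x))⁻¹) := by
  have h := (summable_pc hx).hasSum
  have hx1 : (0:ℝ) < 1 - x := by rw [abs_lt] at hx; linarith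
  have hpos := pSum_pos hx
  have hsq := pSum_sq hx
  have hs : Real.sqrt (1 - x) > 0 := Real.sqrt_pos.mpr hx1
  have hval : pSum x = (Real.sqrt (1 - x))⁻¹ := by
    have h1 : ((Real.sqrt (1 - x))⁻¹) ^ 2 = (1 - x)⁻¹ := by
      rw [← Real.sq_sqrt hx1.le]; field_simp; rw [Real.sqrt_sq hs.le]
    have h2 : (pSum x) ^ 2 = (1 - x)⁻¹ := by
      field_simp at hsq ⊢
      linarith [hsq]
    have h3 : (pSum x - (Real.sqrt (1 - x))⁻¹) * (pSum x + (Real.sqrt (1 - x))⁻¹) = 0 := by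
      have h12 : (pSum x) ^ 2 = ((Real.sqrt (1 - x))⁻¹) ^ 2 := h2.trans h1.symm
      nlinarith [h12]
    rcases mul_eq_zero.mp h3 with h4 | h4
    · linarith [sub_eq_zero.mp h4]
    · exfalso
      have : (0:ℝ) < pSum x + (Real.sqrt (1 - x))⁻¹ := by positivity
      linarith
  rw [← hval]
  exact h

lemma poch_eval_succ (a : ℝ) (k : ℕ) :
    (ascPochhammer ℝ (k+1)).eval a = (ascPochhammer ℝ k).eval a * (a + k) := by
  rw [ascPochhammer_succ_right]
  simp

lemma poch_eval_pos {a : ℝ} (ha : 0 < a) (k : ℕ) : 0 < (ascPochhammer ℝ k).eval a := by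
  induction k with
  | zero => simp
  | succ k ih =>
      rw [poch_eval_succ]
      have : (0:ℝ) < a + k := by positivity
      positivity

noncomputable def ck (k : ℕ) : ℝ :=
  (ascPochhammer ℝ k).eval (9/4) * (ascPochhammer ℝ k).eval (3/4) /
    ((ascPochhammer ℝ k).eval (5/2) * (Nat.factorial k))

lemma pc_odd_shift (k : ℕ) :
    pc (2*k+3) = pc (2*k+1) * ((4*(k:ℝ)+3)/(4*(k:ℝ)+4)) * ((4*(k:ℝ)+5)/(4*(k:ℝ)+6)) := by
  have h1 : 2*k+2 = (2*k+1)+1 := by ring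
  have h2 : 2*k+3 = (2*k+2)+1 := by ring
  rw [h2, pc, h1, pc]
  push_cast
  field_simp
  ring

lemma ck_closed (k : ℕ) : ck k = 6/5 * (4*(k:ℝ)+5)/(2*(k:ℝ)+3) * pc (2*k+1) := by
  induction k with
  | zero =>
      show ck 0 = _
      unfold ck
      norm_num [pc]
  | succ k ih =>
      have hfact : (Nat.factorial (k+1) : ℝ) = (Nat.factorial k : ℝ) * (k+1) := by
        push_cast [Nat.factorial_succ]; ring
      have hp : (0:ℝ) < (ascPochhammer ℝ k).eval (5/2) := poch_eval_pos (by norm_num) k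
      have hfp : (0:ℝ) < (Nat.factorial k : ℝ) := by positivity
      have hpcpos := pc_pos (2*k+1)
      have hshift := pc_odd_shift k
      unfold ck at ih ⊢
      rw [poch_eval_succ, poch_eval_succ, poch_eval_succ, hfact]
      have h2k : 2*(k+1)+1 = 2*k+3 := by ring
      rw [h2k, hshift]
      have hckk : (ascPochhammer ℝ k).eval (9/4) * (ascPochhammer ℝ k).eval (3/4)
          = (6/5 * (4*(k:ℝ)+5)/(2*(k:ℝ)+3) * pc (2*k+1)) *
            ((ascPochhammer ℝ k).eval (5/2) * (Nat.factorial k)) := by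
        rw [← ih]
        field_simp
      push_cast
      rw [mul_comm ((ascPochhammer ℝ k).eval (9/4)) ((9:ℝ)/4 + k)]
      rw [mul_assoc]
      rw [show (ascPochhammer ℝ k).eval (9/4) * ((ascPochhammer ℝ k).eval (3/4) * (3/4 + (k:ℝ)))
          = ((ascPochhammer ℝ k).eval (9/4) * (ascPochhammer ℝ k).eval (3/4)) * (3/4 + (k:ℝ)) by ring]
      rw [hckk]
      field_simp
      ring

lemma ck_comb (k : ℕ) :
    ck k = 8/5 * pc (2*k+1) - 4/5 * pc (2*k+2) + 8/5 * pc (2*k+3) := by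
  have h1 : 2*k+2 = (2*k+1)+1 := by ring
  have h3 := pc_odd_shift k
  have h2 : pc (2*k+2) = pc (2*k+1) * ((4*(k:ℝ)+3)/(4*(k:ℝ)+4)) := by
    rw [h1, pc]; push_cast; ring
  rw [ck_closed k, h3, h2]
  field_simp
  ring

lemma pc_one : pc 1 = 1/2 := by norm_num [pc]


lemma key_poly (u A B : ℝ) (hA2 : A^2 = 1-u) (hB2 : B^2 = 1+u) :
    (2*(1+u^2)*(B-A) - u*(A+B))*(A+B)^3 = 4*u^3*(3+2*A*B) := by
  linear_combination ((-2) + u - u^2 + 2*u^3 + (-6)*B^2*u + (-4)*A*B + (-4)*A*B*u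
      + (-4)*A*B*u^2 + (-2)*A^2 + (-1)*A^2*u + (-2)*A^2*u^2) * hA2
    + (2 - 5*u + 7*u^2 + 2*u^3 + 2*B^2 - B^2*u + 2*B^2*u^2 + 4*A*B - 4*A*B*u
      + 4*A*B*u^2) * hB2

theorem hyper_init_2 (t : ℝ) (ht0 : 0 ≤ t) (ht1 : t < 1) :
    hyp2F1 (9/4) (3/4) (5/2) t =
      2 * Real.sqrt 2 * (3 + 2 * Real.sqrt (1 - t)) /
        (5 * (1 + Real.sqrt (1 - t)) ^ ((3:ℝ)/2) * Real.sqrt (1 - t)) := by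
  have hdef : hyp2F1 (9/4) (3/4) (5/2) t = ∑' k, ck k * t ^ k := rfl
  have h232 : ((2:ℝ)) ^ ((3:ℝ)/2) = 2 * Real.sqrt 2 := by
    rw [show (3:ℝ)/2 = 1 + (1:ℝ)/2 by norm_num, Real.rpow_add (by norm_num), Real.rpow_one,
      ← Real.sqrt_eq_rpow]
  rcases eq_or_lt_of_le ht0 with h0 | htpos
  · -- t = 0
    rw [hdef, ← h0]
    rw [tsum_eq_single 0 (fun k hk => by
      cases k with
      | zero => simp at hk
      | succ k => simp)]
    have : ck 0 = 1 := by unfold ck; norm_num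
    rw [this]
    rw [show (1:ℝ) - 0 = 1 by ring, Real.sqrt_one,
      show (1:ℝ) + 1 = 2 by norm_num, h232]
    have h2 : Real.sqrt 2 > 0 := Real.sqrt_pos.mpr (by norm_num)
    have h2' : Real.sqrt 2 ^ 2 = 2 := Real.sq_sqrt (by norm_num)
    rw [pow_zero]
    field_simp
    nlinarith [h2, h2']
  · -- t > 0
    set u := Real.sqrt t with hu
    have hu0 : 0 < u := Real.sqrt_pos.mpr htpos
    have hut : u ^ 2 = t := Real.sq_sqrt ht0
    have hu1 : u < 1 := by nlinarith
    set A := Real.sqrt (1 - u) with hA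
    set B := Real.sqrt (1 + u) with hB
    have hA2 : A ^ 2 = 1 - u := Real.sq_sqrt (by linarith)
    have hB2 : B ^ 2 = 1 + u := Real.sq_sqrt (by linarith)
    have hApos : 0 < A := Real.sqrt_pos.mpr (by linarith)
    have hBpos : 0 < B := Real.sqrt_pos.mpr (by linarith)
    have habs : |u| < 1 := by rw [abs_of_pos hu0]; exact hu1
    have habs' : |(-u)| < 1 := by rwa [abs_neg]
    have hPa : HasSum (fun m => pc m * u ^ m) A⁻¹ := hasSum_pc habs
    have hPb : HasSum (fun m => pc m * (-u) ^ m) B⁻¹ := by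
      have := hasSum_pc habs'
      rwa [show 1 - -u = 1 + u by ring] at this
    -- even part
    have hinj2 : Function.Injective (fun k : ℕ => 2 * k) := fun a b h => by dsimp at h; omega
    have hinj2' : Function.Injective (fun k : ℕ => 2 * k + 1) := fun a b h => by dsimp at h; omega
    have hE : HasSum (fun k => pc (2*k) * u ^ (2*k)) ((A⁻¹ + B⁻¹)/2) := by
      have h := (hPa.add hPb).div_const 2
      rw [show (fun k : ℕ => pc (2*k) * u ^ (2*k))
          = (fun m : ℕ => (pc m * u ^ m + pc m * (-u) ^ m)/2) ∘ (fun k : ℕ => 2 * k) by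
        funext k
        have : (-u) ^ (2*k) = u ^ (2*k) := Even.neg_pow ⟨k, by ring⟩ u
        simp only [Function.comp, this]
        ring]
      rw [Function.Injective.hasSum_iff hinj2]
      · exact h
      · intro m hm
        have hodd : Odd m := by
          rcases Nat.even_or_odd m with he | ho
          · obtain ⟨j, hj⟩ := he
            exact absurd ⟨j, by dsimp; omega⟩ hm
          · exact ho
        have : (-u) ^ m = -(u ^ m) := Odd.neg_pow hodd u
        simp only [this]
        ring
    have hO : HasSum (fun k => pc (2*k+1) * u ^ (2*k+1)) ((A⁻¹ - B⁻¹)/2) := by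
      have h := (hPa.sub hPb).div_const 2
      rw [show (fun k : ℕ => pc (2*k+1) * u ^ (2*k+1))
          = (fun m : ℕ => (pc m * u ^ m - pc m * (-u) ^ m)/2) ∘ (fun k : ℕ => 2 * k + 1) by
        funext k
        have : (-u) ^ (2*k+1) = -(u ^ (2*k+1)) := Odd.neg_pow ⟨k, by ring⟩ u
        simp only [Function.comp, this]
        ring]
      rw [Function.Injective.hasSum_iff hinj2']
      · exact h
      · intro m hm
        have heven : Even m := by
          rcases Nat.even_or_odd m with he | ho
          · exact he
          · obtain ⟨j, hj⟩ := ho; exact absurd ⟨j, by dsimp; omega⟩ hm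
        have : (-u) ^ m = u ^ m := Even.neg_pow heven u
        simp only [this]
        ring
    have hO3 : HasSum (fun k => pc (2*k+3) * u ^ (2*k+3))
        ((A⁻¹ - B⁻¹)/2 - pc 1 * u) := by
      have h := (hasSum_nat_add_iff' (f := fun k => pc (2*k+1) * u ^ (2*k+1)) 1).mpr hO
      simp only [Finset.range_one, Finset.sum_singleton] at h
      have hfun : (fun n => pc (2*(n+1)+1) * u ^ (2*(n+1)+1))
          = (fun k => pc (2*k+3) * u ^ (2*k+3)) := by
        funext n
        congr 2 <;> omega
      rw [hfun] at h
      simpa [pow_one] using h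
    have hE2 : HasSum (fun k => pc (2*k+2) * u ^ (2*k+2)) ((A⁻¹ + B⁻¹)/2 - 1) := by
      have h := (hasSum_nat_add_iff' (f := fun k => pc (2*k) * u ^ (2*k)) 1).mpr hE
      simp only [Finset.range_one, Finset.sum_singleton] at h
      have hfun : (fun n => pc (2*(n+1)) * u ^ (2*(n+1)))
          = (fun k => pc (2*k+2) * u ^ (2*k+2)) := by
        funext n
        congr 2 <;> omega
      rw [hfun] at h
      simpa [pc] using h
    set O := (A⁻¹ - B⁻¹)/2 with hOdef
    set E := (A⁻¹ + B⁻¹)/2 with hEdef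
    have hT := ((hO.mul_left (8/5*u^2)).sub (hE2.mul_left (4/5*u))).add (hO3.mul_left (8/5))
    have hdiv := hT.div_const (u^3)
    have hfun2 : (fun k => (8/5*u^2 * (pc (2*k+1) * u ^ (2*k+1))
          - 4/5*u * (pc (2*k+2) * u ^ (2*k+2))
          + 8/5 * (pc (2*k+3) * u ^ (2*k+3))) / u^3)
        = (fun k => ck k * t ^ k) := by
      funext k
      rw [ck_comb k, ← hut, ← pow_mul]
      rw [div_eq_iff (pow_ne_zero 3 hu0.ne')]
      ring
    rw [hfun2] at hdiv
    rw [hdef, hdiv.tsum_eq]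
    -- now the closed-form algebra
    have hs : Real.sqrt (1 - t) = A * B := by
      rw [show 1 - t = (1-u) * (1+u) by nlinarith, Real.sqrt_mul (by linarith)]
    set S2 := Real.sqrt 2 with hS2def
    have hS2 : S2 ^ 2 = 2 := Real.sq_sqrt (by norm_num)
    have hS2pos : 0 < S2 := Real.sqrt_pos.mpr (by norm_num)
    have hy : (0:ℝ) ≤ (A+B)/S2 := by positivity
    have h1s : 1 + Real.sqrt (1 - t) = ((A+B)/S2)^2 := by
      rw [hs, div_pow, hS2]
      linear_combination (-(1:ℝ)/2) * hA2 + (-(1:ℝ)/2) * hB2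
    have hpow : (1 + Real.sqrt (1 - t)) ^ ((3:ℝ)/2) = ((A+B)/S2)^3 := by
      rw [h1s, ← Real.rpow_natCast ((A+B)/S2) 2, ← Real.rpow_mul hy]
      rw [show ((2:ℕ):ℝ) * ((3:ℝ)/2) = ((3:ℕ):ℝ) by norm_num]
      exact Real.rpow_natCast _ 3
    rw [hpow, hs]
    have key := key_poly u A B hA2 hB2
    rw [hOdef, hEdef, pc_one]
    rw [div_eq_div_iff (by positivity) (by positivity)]
    field_simp
    linear_combination 4 * key
      - 4*u^3*(3+2*A*B)*(S2^2+2) * hS2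
end

section
/- Define the sequence of rational functions Q_m by Q_0(a) = 1 and the recurrence 2(m+1) Q_{m+1}(a) = [2(m+1)(a+1) + (2m+1)] Q_m(a) + [2(a+1)^2 - 2(a+1)] Q_m'(a). Then each Q_m is a polynomial in a, and Q_m(a) = P_m(a) := 2^(-2m) Σ_{k=0}^m 2^k · C(2m-2k, m-k) · C(m+k, k) · (a+1)^k for all m. -/
open Polynomial Finset

noncomputable def dd (m k : ℕ) : ℝ :=
  (2:ℝ)^k * (Nat.choose (2*m - 2*k) (m-k)) * (Nat.choose (m+k) k)

-- central binomial: (n+1) * C(2(n+1), n+1) = (4n+2) * C(2n, n), in ℝ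
lemma l1 (n : ℕ) : ((n:ℝ)+1) * (Nat.choose (2*(n+1)) (n+1)) = (4*n+2) * (Nat.choose (2*n) n) := by
  have h := Nat.succ_mul_centralBinom_succ n
  have h' : (n+1) * Nat.choose (2*(n+1)) (n+1) = (4*n+2) * Nat.choose (2*n) n := by
    simp only [Nat.centralBinom] at h
    rw [h]; ring
  exact_mod_cast h'
  
-- (m+k+1) C(m+k, k) = (k+1) C(m+k+1, k+1)
lemma l2 (m k : ℕ) : ((m:ℝ)+(k:ℝ)+1) * (Nat.choose (m+k) k) = ((k:ℝ)+1) * (Nat.choose (m+k+1) (k+1)) := by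
  have h := Nat.add_one_mul_choose_eq (m+k) k
  have h' : (m+k+1) * Nat.choose (m+k) k = (k+1) * Nat.choose (m+k+1) (k+1) := by
    simpa [Nat.succ_eq_add_one, mul_comm] using h
  exact_mod_cast h'

-- (m+1) C(m+1+k, k) = (m+k+1) C(m+k, k)
lemma l3 (m k : ℕ) : ((m:ℝ)+1) * (Nat.choose (m+1+k) k) = ((m:ℝ)+(k:ℝ)+1) * (Nat.choose (m+k) k) := by
  have h := Nat.add_one_mul_choose_eq (m+k) m
  have e1 : Nat.choose (m+k) m = Nat.choose (m+k) k := Nat.choose_symm_add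
  have e2 : Nat.choose (m+k+1) (m+1) = Nat.choose (m+1+k) k := by
    have : Nat.choose ((m+1)+k) (m+1) = Nat.choose ((m+1)+k) k := Nat.choose_symm_add
    simpa [Nat.add_right_comm] using this
  have h' : (m+k+1) * Nat.choose (m+k) k = (m+1) * Nat.choose (m+1+k) k := by
    rw [← e1, ← e2]
    simpa [Nat.succ_eq_add_one, mul_comm] using h
  exact_mod_cast h'.symm

lemma key (m k : ℕ) (hk : k ≤ m+1) :
    ((m:ℝ)+1) * dd (m+1) k =
      (if k = 0 then 0 else 4*((m:ℝ)+(k:ℝ)) * dd m (k-1)) +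
      (if k ≤ m then (4*(m:ℝ)+2-4*(k:ℝ)) * dd m k else 0) := by
  match k with
  | 0 =>
    simp only [if_pos rfl, if_pos (Nat.zero_le m), zero_add, dd]
    have e1 : 2*(m+1) - 2*0 = 2*(m+1) := by omega
    have e2 : m+1-0 = m+1 := by omega
    have e3 : 2*m-2*0 = 2*m := by omega
    have e4 : m-0 = m := by omega
    rw [e1, e2, e3, e4]
    simp only [Nat.choose_zero_right]
    have := l1 m
    push_cast
    push_cast at this
    linear_combination this
  | (j+1) =>
    have hj : j ≤ m := by omega
    rw [if_neg (by omega)]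
    rcases eq_or_lt_of_le hj with hje | hjl
    · -- j = m, top coefficient
      subst hje
      rw [if_neg (by omega)]
      simp only [dd]
      have e1 : 2*(j+1) - 2*(j+1) = 0 := by omega
      have e2 : (j+1)-(j+1) = 0 := by omega
      have e3 : 2*j-2*j = 0 := by omega
      have e4 : j-j = 0 := by omega
      have e5 : j+1-1 = j := by omega
      rw [e5, e1, e2, e3, e4]
      have h1 := l1 j
      have ec : (2:ℕ)*(j+1) = j+1+(j+1) := by omega
      have ec2 : (2:ℕ)*j = j+j := by omega
      rw [ec, ec2] at h1
      simp only [Nat.choose_zero_right, Nat.choose_self, Nat.cast_one]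
      push_cast
      linear_combination 2*(2:ℝ)^j * h1
    · -- j < m
      rw [if_pos (by omega)]
      obtain ⟨a, rfl⟩ : ∃ a, m = a + j + 1 := ⟨m - j - 1, by omega⟩
      simp only [dd]
      have e1 : 2*(a+j+1+1) - 2*(j+1) = 2*(a+1) := by omega
      have e2 : (a+j+1+1)-(j+1) = a+1 := by omega
      have e3 : 2*(a+j+1)-2*(j+1) = 2*a := by omega
      have e4 : (a+j+1)-(j+1) = a := by omega
      have e5 : j+1-1 = j := by omega
      have e6 : 2*(a+j+1)-2*j = 2*(a+1) := by omega
      have e7 : (a+j+1)-j = a+1 := by omega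
      have e8 : (a+j+1+1)+(j+1) = (a+j+1)+(j+1)+1 := by omega
      have e9 : (a+j+1)+j+1 = (a+j+1)+(j+1) := by omega
      rw [e5, e1, e2, e3, e4, e6, e7, e8]
      have h1 := l1 a
      have h2 := l2 (a+j+1) j
      have h3 := l3 (a+j+1) (j+1)
      rw [e9] at h2
      have e10 : (a+j+1)+1+(j+1) = (a+j+1)+(j+1)+1 := by omega
      rw [e10] at h3
      push_cast at h2 h3 ⊢
      linear_combination (2:ℝ)^(j+1) * ((Nat.choose (2*(a+1)) (a+1) : ℝ)) * h3
        - (2:ℝ)^(j+2) * ((Nat.choose (2*(a+1)) (a+1) : ℝ)) * h2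
        + (2:ℝ)^(j+1) * ((Nat.choose ((a+j+1)+(j+1)) (j+1) : ℝ)) * h1


lemma real_rec (m : ℕ) (y : ℝ) :
    ((m:ℝ)+1) * ∑ k ∈ Finset.range (m+1+1), dd (m+1) k * y^k =
      (4*((m:ℝ)+1)*y + (4*(m:ℝ)+2)) * ∑ k ∈ Finset.range (m+1), dd m k * y^k
      + (4*y^2-4*y) * ∑ k ∈ Finset.range (m+1), dd m k * (k:ℝ) * y^(k-1) := by
  have hA : (4*((m:ℝ)+1)*y + (4*(m:ℝ)+2)) * ∑ k ∈ Finset.range (m+1), dd m k * y^k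
      + (4*y^2-4*y) * ∑ k ∈ Finset.range (m+1), dd m k * (k:ℝ) * y^(k-1)
      = ∑ k ∈ Finset.range (m+1), ((4*(m:ℝ)+4*(k:ℝ)+4) * dd m k * y^(k+1)
          + (4*(m:ℝ)+2-4*(k:ℝ)) * dd m k * y^k) := by
    rw [Finset.mul_sum, Finset.mul_sum, ← Finset.sum_add_distrib]
    apply Finset.sum_congr rfl
    intro k _
    match k with
    | 0 => push_cast; ring
    | (j+1) =>
      simp only [Nat.succ_sub_one]
      push_cast
      ring
  rw [hA]
  have hS1 : ∑ k ∈ Finset.range (m+1+1),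
        (if k = 0 then (0:ℝ) else 4*((m:ℝ)+(k:ℝ)) * dd m (k-1)) * y^k
      = ∑ k ∈ Finset.range (m+1), (4*(m:ℝ)+4*(k:ℝ)+4) * dd m k * y^(k+1) := by
    rw [Finset.sum_range_succ']
    simp only [Nat.succ_ne_zero, if_false, eq_self_iff_true, if_true, zero_mul, add_zero, Nat.add_sub_cancel]
    apply Finset.sum_congr rfl
    intro k _
    push_cast
    ring
  have hS2 : ∑ k ∈ Finset.range (m+1+1),
        (if k ≤ m then (4*(m:ℝ)+2-4*(k:ℝ)) * dd m k else (0:ℝ)) * y^k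
      = ∑ k ∈ Finset.range (m+1), (4*(m:ℝ)+2-4*(k:ℝ)) * dd m k * y^k := by
    rw [Finset.sum_range_succ]
    rw [if_neg (by omega), zero_mul, add_zero]
    apply Finset.sum_congr rfl
    intro k hk
    rw [if_pos (Nat.lt_succ_iff.mp (Finset.mem_range.mp hk))]
  rw [Finset.sum_add_distrib, ← hS1, ← hS2, ← Finset.sum_add_distrib, Finset.mul_sum]
  apply Finset.sum_congr rfl
  intro k hk
  rw [← mul_assoc, key m k (Nat.lt_succ_iff.mp (Finset.mem_range.mp hk))]
  ring


noncomputable def Pm (m : ℕ) : Polynomial ℝ :=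
  C ((2:ℝ) ^ (-(2*(m:ℤ)))) * ∑ k ∈ Finset.range (m+1), C (dd m k) * (X + 1)^k

lemma poly_rec (m : ℕ) :
    C (2*((m:ℝ)+1)) * Pm (m+1) =
      (C (2*((m:ℝ)+1)) * (X + 1) + C (2*(m:ℝ)+1)) * Pm m +
        (2*(X+1)^2 - 2*(X+1)) * derivative (Pm m) := by
  have hd : derivative (∑ k ∈ Finset.range (m+1), C (dd m k) * (X+1)^k)
      = ∑ k ∈ Finset.range (m+1), C (dd m k * k) * (X+1)^(k-1) := by
    rw [derivative_sum]
    apply Finset.sum_congr rfl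
    intro k _
    rw [Polynomial.derivative_C_mul, derivative_pow]
    simp [C_mul, mul_comm, mul_assoc, mul_left_comm]
  apply Polynomial.funext
  intro x
  simp only [Pm, derivative_mul, derivative_C, zero_mul, zero_add, hd,
    eval_mul, eval_add, eval_sub, eval_pow, eval_C, eval_X, eval_one, eval_finset_sum,
    eval_ofNat]
  have hc : (2:ℝ) ^ (-(2 * ((m+1 : ℕ) : ℤ))) = (2:ℝ) ^ (-(2 * (m:ℤ))) / 4 := by
    rw [show (-(2 * ((m+1 : ℕ) : ℤ))) = (-(2 * (m:ℤ))) - 2 by push_cast; ring,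
      zpow_sub₀ (by norm_num : (2:ℝ) ≠ 0)]
    norm_num
  linear_combination ((2:ℝ) ^ (-(2 * (m:ℤ))) / 2) * real_rec m (x+1)
    + (2*((m:ℝ)+1) * ∑ k ∈ Finset.range (m+1+1), dd (m+1) k * (x+1)^k) * hc

theorem Q_eq_P (Q : ℕ → Polynomial ℝ) (hQ0 : Q 0 = 1)
    (hrec : ∀ m : ℕ, C (2*((m:ℝ)+1)) * Q (m+1) =
        (C (2*((m:ℝ)+1)) * (X + 1) + C (2*(m:ℝ)+1)) * Q m +
          (2*(X+1)^2 - 2*(X+1)) * derivative (Q m)) :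
    ∀ m : ℕ, Q m = C ((2:ℝ) ^ (-(2*(m:ℤ)))) *
      ∑ k ∈ Finset.range (m+1),
        C ((2:ℝ)^k * (Nat.choose (2*m - 2*k) (m - k)) * (Nat.choose (m+k) k)) * (X + 1)^k := by
  have main : ∀ m, Q m = Pm m := by
    intro m
    induction m with
    | zero => rw [hQ0]; simp [Pm, dd]
    | succ n ih =>
      have h := hrec n
      rw [ih] at h
      have hC : (C (2*((n:ℝ)+1)) : Polynomial ℝ) ≠ 0 :=
        Polynomial.C_ne_zero.mpr (by positivity)
      exact mul_left_cancel₀ hC (h.trans (poly_rec n).symm)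
  intro m
  rw [main m]
  simp only [Pm, dd]
end

section
/- For all natural numbers m and k with 0 ≤ k ≤ m, the identity 2^k (m+1) C(2m-2k+2, m-k+1) C(m+k+1, m+1) = 2^(k+1)(m+1) C(2m-2k+2, m-k+1) C(m+k-1, m) + 2^(k+1)(2m+1) C(2m-2k, m-k) C(m+k, m) + 2^(k+1)(k-1) C(2m-2k+2, m-k+1) C(m+k-1, m) - 2^(k+2) k C(2m-2k, m-k) C(m+k, m) holds. -/
lemma cb_key (n : ℕ) : ((n:ℤ)+1) * Nat.choose (2*n+2) (n+1) = 2*(2*n+1) * Nat.choose (2*n) n := by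
  have h := Nat.succ_mul_centralBinom_succ n
  have h1 : Nat.centralBinom (n+1) = Nat.choose (2*n+2) (n+1) := by
    unfold Nat.centralBinom
    congr 1
  rw [h1, Nat.centralBinom] at h
  exact_mod_cast h

theorem coefficient_identity (m k : ℕ) (hk : k ≤ m) :
    (2:ℤ)^k * (m+1) * (Nat.choose (2*m - 2*k + 2) (m - k + 1)) * (Nat.choose (m+k+1) (m+1)) =
      (2:ℤ)^(k+1) * (m+1) * (Nat.choose (2*m - 2*k + 2) (m - k + 1)) * (Nat.choose (m+k-1) m)
      + (2:ℤ)^(k+1) * (2*m+1) * (Nat.choose (2*m - 2*k) (m - k)) * (Nat.choose (m+k) m)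
      + (2:ℤ)^(k+1) * ((k:ℤ) - 1) * (Nat.choose (2*m - 2*k + 2) (m - k + 1)) * (Nat.choose (m+k-1) m)
      - (2:ℤ)^(k+2) * k * (Nat.choose (2*m - 2*k) (m - k)) * (Nat.choose (m+k) m) := by
  obtain ⟨n, rfl⟩ : ∃ n, m = k + n := ⟨m - k, by omega⟩
  rw [show 2*(k+n) - 2*k = 2*n from by omega, show k+n-k = n from by omega]
  have f1 := cb_key n
  match k with
  | 0 =>
    simp only [Nat.zero_add, Nat.add_zero, pow_zero, Nat.choose_self, Nat.cast_one]
    match n with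
    | 0 => norm_num
    | n+1 =>
      have hB : Nat.choose (n+1-1) (n+1) = 0 := Nat.choose_eq_zero_of_lt (by omega)
      have f1' := cb_key (n+1)
      rw [hB]
      push_cast [hB] at *
      linarith [f1']
  | k+1 =>
    rw [show k+1+n+(k+1)-1 = k+1+n+k from by omega]
    have f2 := Nat.add_one_mul_choose_eq (k+1+n+(k+1)) (k+1+n)
    have f3 := Nat.add_one_mul_choose_eq (k+1+n+k) k
    have hs1 : Nat.choose (k+1+n+k) k = Nat.choose (k+1+n+k) (k+1+n) := by
      rw [show k+1+n+k = k+(k+1+n) from by ring]; exact Nat.choose_symm_add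
    have hs2 : Nat.choose (k+1+n+k+1) (k+1) = Nat.choose (k+1+n+(k+1)) (k+1+n) := by
      rw [show k+1+n+k+1 = (k+1)+(k+1+n) from by ring, Nat.choose_symm_add]
      congr 1
      ring
    rw [hs1, hs2] at f3
    zify at f2 f3
    push_cast at f2 f3 ⊢
    linear_combination (-(2:ℤ)^(k+1) * (Nat.choose (2*n+2) (n+1) : ℤ)) * f2
      + (-(2:ℤ)^(k+2) * (Nat.choose (2*n+2) (n+1) : ℤ)) * f3
      + ((2:ℤ)^(k+1) * (Nat.choose (k+1+n+(k+1)) (k+1+n) : ℤ)) * f1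
end

section
/- For m a natural number, a > -1 real, and b > 0 with b = 2/a^2 - 1 (i.e., 0 < a < 1), the quartic integral satisfies N_{0,4}(a;m) = (2^(m-1/2) / (m! · a^(2m+3/2))) · ∫_0^∞ t^m e^(-bt) K_{1/4}(t) dt, where K_{1/4} is the modified Bessel function of the second kind of order 1/4. -/
open MeasureTheory Real Set
open scoped ENNReal

/-- The modified Bessel function of the second kind `K_ν(x)`, via its standard
integral representation (valid for `x > 0`). -/
noncomputable def besselK (ν x : ℝ) : ℝ :=
  ∫ t in Set.Ioi (0:ℝ), Real.exp (-x * Real.cosh t) * Real.cosh (ν * t)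

lemma besselK_nonneg (ν x : ℝ) : 0 ≤ besselK ν x :=
  integral_nonneg fun t => by positivity

lemma besselK_stronglyMeasurable (ν : ℝ) : StronglyMeasurable (besselK ν) := by
  have hf : StronglyMeasurable (Function.uncurry fun x t : ℝ =>
      Real.exp (-x * Real.cosh t) * Real.cosh (ν * t)) := by
    apply Continuous.stronglyMeasurable
    unfold Function.uncurry
    fun_prop
  exact hf.integral_prod_right

lemma quartic_gauss {μ ν : ℝ} (hμ : 0 < μ) (hν : 0 < ν) :
    ∫ x in Set.Ioi (0:ℝ), Real.exp (-(μ * x^4) - 2*ν*x^2)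
      = 1/4 * Real.sqrt (2*ν/μ) * Real.exp (ν^2/(2*μ)) * besselK (1/4) (ν^2/(2*μ)) := by
  set c : ℝ := Real.sqrt (2*ν/μ) with hc
  set z : ℝ := ν^2/(2*μ) with hz
  have hcpos : 0 < c := Real.sqrt_pos.2 (by positivity)
  have hc2 : c^2 = 2*ν/μ := Real.sq_sqrt (by positivity)
  have hzpos : 0 < z := by positivity
  have hderiv : ∀ u ∈ Ioi (0:ℝ), HasDerivWithinAt (fun u => c * Real.sinh (u/4))
      (c/4 * Real.cosh (u/4)) (Ioi 0) u := by
    intro u _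
    have h1 : HasDerivAt (fun u : ℝ => u/4) (1/4) u := (hasDerivAt_id u).div_const 4
    have h2 : HasDerivAt (fun u : ℝ => Real.sinh (u/4)) (Real.cosh (u/4) * (1/4)) u :=
      by have := (Real.hasDerivAt_sinh (u/4)).comp u h1; exact this
    have h3 := h2.const_mul c
    have h4 : c/4 * Real.cosh (u/4) = c * (Real.cosh (u/4) * (1/4)) := by ring
    rw [h4]; exact h3.hasDerivWithinAt
  have hinj : InjOn (fun u => c * Real.sinh (u/4)) (Ioi 0) := by
    intro x _ y _ h
    have h1 := mul_left_cancel₀ hcpos.ne' h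
    have := Real.sinh_injective h1
    linarith
  have himg : (fun u => c * Real.sinh (u/4)) '' (Ioi 0) = Ioi 0 := by
    ext y
    simp only [mem_image, mem_Ioi]
    constructor
    · rintro ⟨u, hu, rfl⟩
      exact mul_pos hcpos (Real.sinh_pos_iff.2 (by linarith))
    · intro hy
      refine ⟨4 * Real.arsinh (y/c), ?_, ?_⟩
      · have := Real.arsinh_pos_iff.2 (div_pos hy hcpos); linarith
      · rw [show 4 * Real.arsinh (y/c) / 4 = Real.arsinh (y/c) by ring, Real.sinh_arsinh]
        field_simp
  have key : ∀ u : ℝ, μ * (c * Real.sinh (u/4))^4 + 2*ν*(c * Real.sinh (u/4))^2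
      = z * (Real.cosh u - 1) := by
    intro u
    set v := u/4 with hv
    have hA : Real.cosh u = 1 + 2 * Real.sinh (2*v) ^ 2 := by
      rw [show u = 2*(2*v) by rw [hv]; ring, Real.cosh_two_mul, Real.cosh_sq']; ring
    have hB : Real.sinh (2*v) = 2 * Real.sinh v * Real.cosh v := Real.sinh_two_mul v
    have h4 : Real.cosh v^2 = 1 + Real.sinh v^2 := Real.cosh_sq' v
    have e4 : (c * Real.sinh v)^4 = (c^2)^2 * Real.sinh v^4 := by ring
    have e2 : (c * Real.sinh v)^2 = c^2 * Real.sinh v^2 := by ring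
    rw [e4, e2, hc2, hA, hB, hz]
    have hμ' : μ ≠ 0 := hμ.ne'
    have h5 : (2 * Real.sinh v * Real.cosh v)^2 = 4*Real.sinh v^2*(1+Real.sinh v^2) := by
      rw [← h4]; ring
    rw [h5]
    field_simp
    ring
  rw [← himg, integral_image_eq_integral_abs_deriv_smul measurableSet_Ioi hderiv hinj]
  have congr1 : ∀ u ∈ Ioi (0:ℝ), |c/4 * Real.cosh (u/4)| •
      Real.exp (-(μ * (c * Real.sinh (u/4))^4) - 2*ν*(c * Real.sinh (u/4))^2)
      = (1/4 * c * Real.exp z) * (Real.exp (-z * Real.cosh u) * Real.cosh (1/4 * u)) := by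
    intro u _
    have habs : |c/4 * Real.cosh (u/4)| = c/4 * Real.cosh (u/4) :=
      abs_of_nonneg (by positivity)
    have hexp : -(μ * (c * Real.sinh (u/4))^4) - 2*ν*(c * Real.sinh (u/4))^2
        = z + (-z * Real.cosh u) := by
      have := key u; linarith
    rw [smul_eq_mul, habs, hexp, Real.exp_add, show (1/4:ℝ) * u = u/4 by ring]
    ring
  rw [setIntegral_congr_fun measurableSet_Ioi congr1, integral_const_mul]
  rfl

lemma gamma_int (n : ℕ) {A : ℝ} (hA : 0 < A) :
    ∫ s in Set.Ioi (0:ℝ), s ^ n * Real.exp (-(A * s)) = n.factorial / A^(n+1) := by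
  have h := Real.integral_rpow_mul_exp_neg_mul_Ioi (a := (n:ℝ)+1) (r := A) (by positivity) hA
  have hcongr : ∀ t ∈ Ioi (0:ℝ), t ^ ((n:ℝ)+1-1) * Real.exp (-(A*t)) = t ^ n * Real.exp (-(A*t)) := by
    intro t ht
    rw [show (n:ℝ)+1-1 = (n:ℝ) by ring, Real.rpow_natCast]
  rw [setIntegral_congr_fun measurableSet_Ioi hcongr] at h
  rw [h, show ((n:ℝ)+1) = ((n+1 : ℕ):ℝ) by push_cast; ring, Real.rpow_natCast]
  push_cast
  rw [Real.Gamma_nat_eq_factorial, one_div, inv_pow]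
  field_simp

lemma int_pow_exp (n : ℕ) {A : ℝ} (hA : 0 < A) :
    IntegrableOn (fun s : ℝ => s ^ n * Real.exp (-(A * s))) (Ioi 0) := by
  have h := integrableOn_rpow_mul_exp_neg_mul_rpow (s := (n:ℝ)) (p := 1) (b := A)
    (neg_one_lt_zero.trans_le (Nat.cast_nonneg n)) one_pos hA
  apply h.congr_fun ?_ measurableSet_Ioi
  intro x hx
  simp only [Real.rpow_natCast, Real.rpow_one, neg_mul]

lemma int_quartic_exp {μ ν : ℝ} (hμ : 0 < μ) (hν : 0 < ν) :
    IntegrableOn (fun x : ℝ => Real.exp (-(μ * x^4) - 2*ν*x^2)) (Ioi 0) := by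
  apply Integrable.mono' ((integrable_exp_neg_mul_sq (show (0:ℝ) < 2*ν by positivity)).integrableOn)
  · apply Continuous.aestronglyMeasurable; fun_prop
  · filter_upwards with x
    rw [Real.norm_eq_abs, abs_of_nonneg (Real.exp_pos _).le]
    apply Real.exp_le_exp.2
    nlinarith [pow_nonneg (sq_nonneg x) 2, sq_nonneg x, sq_nonneg (x^2)]

theorem quartic_integral_via_besselK (m : ℕ) (a b : ℝ)
    (ha0 : 0 < a) (ha1 : a < 1) (hb : b = 2 / a^2 - 1) :
    ∫ x in Set.Ioi (0:ℝ), 1 / (x^4 + 2*a*x^2 + 1)^(m+1) =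
      (2:ℝ) ^ ((m:ℝ) - 1/2) / ((Nat.factorial m : ℝ) * a ^ (2*(m:ℝ) + 3/2)) *
        ∫ t in Set.Ioi (0:ℝ), t^m * Real.exp (-b*t) * besselK (1/4) t := by
  have ha : a ≠ 0 := ha0.ne'
  have hfact : (0:ℝ) < m.factorial := Nat.cast_pos.2 m.factorial_pos
  have hP : ∀ x : ℝ, 0 < x^4 + 2*a*x^2 + 1 := by
    intro x
    nlinarith [pow_nonneg (sq_nonneg x) 2, sq_nonneg (x^2), mul_nonneg ha0.le (sq_nonneg x)]
  have hKm : Measurable (fun s : ℝ => besselK (1/4) (a^2*s/2)) :=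
    (besselK_stronglyMeasurable (1/4)).measurable.comp (by fun_prop)
  set g : ℝ → ℝ := fun s => s^m * Real.exp (-s) *
      (1/4 * Real.sqrt (2*a) * Real.exp (a^2*s/2) * besselK (1/4) (a^2*s/2)) with hg
  set I : ℝ≥0∞ := ∫⁻ x in Ioi (0:ℝ), ∫⁻ s in Ioi (0:ℝ),
      ENNReal.ofReal (s^m * Real.exp (-((x^4 + 2*a*x^2 + 1) * s))) with hI
  have h1 : ∫ x in Set.Ioi (0:ℝ), 1 / (x^4 + 2*a*x^2 + 1)^(m+1)
      = ((m.factorial : ℝ))⁻¹ * I.toReal := by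
    have hx : ∀ x : ℝ, (∫⁻ s in Ioi (0:ℝ),
        ENNReal.ofReal (s^m * Real.exp (-((x^4 + 2*a*x^2 + 1) * s))))
        = ENNReal.ofReal ((m.factorial : ℝ)) * ENNReal.ofReal (1 / (x^4 + 2*a*x^2 + 1)^(m+1)) := by
      intro x
      rw [← ofReal_integral_eq_lintegral_ofReal (int_pow_exp m (hP x))
        (by filter_upwards [self_mem_ae_restrict measurableSet_Ioi] with s hs
            have hs' : (0:ℝ) < s := hs
            positivity),
        gamma_int m (hP x), ← ENNReal.ofReal_mul hfact.le]
      congr 1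
      field_simp
    have hJm : Measurable (fun x : ℝ => ENNReal.ofReal (1 / (x^4 + 2*a*x^2 + 1)^(m+1))) := by
      apply ENNReal.measurable_ofReal.comp
      apply Measurable.div measurable_const (by fun_prop)
    have hIeq : I = ENNReal.ofReal ((m.factorial : ℝ)) *
        ∫⁻ x in Ioi (0:ℝ), ENNReal.ofReal (1 / (x^4 + 2*a*x^2 + 1)^(m+1)) := by
      rw [hI]
      simp_rw [hx]
      rw [lintegral_const_mul _ hJm]
    rw [hIeq, ENNReal.toReal_mul, ENNReal.toReal_ofReal hfact.le]
    rw [integral_eq_lintegral_of_nonneg_ae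
      (by filter_upwards with x
          have := hP x
          positivity)
      (by apply Continuous.aestronglyMeasurable
          exact Continuous.div continuous_const (by fun_prop) (fun x => pow_ne_zero _ (hP x).ne'))]
    field_simp
  have h2 : I = ∫⁻ s in Ioi (0:ℝ), ∫⁻ x in Ioi (0:ℝ),
      ENNReal.ofReal (s^m * Real.exp (-((x^4 + 2*a*x^2 + 1) * s))) := by
    rw [hI]
    apply lintegral_lintegral_swap
    apply Measurable.aemeasurable
    apply ENNReal.measurable_ofReal.comp
    apply Continuous.measurable
    fun_prop
  have h3 : ∀ s ∈ Ioi (0:ℝ), (∫⁻ x in Ioi (0:ℝ),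
      ENNReal.ofReal (s^m * Real.exp (-((x^4 + 2*a*x^2 + 1) * s)))) = ENNReal.ofReal (g s) := by
    intro s hs
    have hs0 : (0:ℝ) < s := hs
    have hpt : ∀ x : ℝ, s^m * Real.exp (-((x^4 + 2*a*x^2 + 1) * s))
        = (s^m * Real.exp (-s)) * Real.exp (-(s * x^4) - 2*(a*s)*x^2) := by
      intro x
      rw [show -((x^4 + 2*a*x^2 + 1) * s) = -s + (-(s * x^4) - 2*(a*s)*x^2) by ring,
        Real.exp_add]
      ring
    simp_rw [hpt]
    have hc1 : (0:ℝ) ≤ s^m * Real.exp (-s) := by positivity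
    simp_rw [ENNReal.ofReal_mul hc1]
    rw [lintegral_const_mul _
      ((by fun_prop : Continuous fun x:ℝ => Real.exp (-(s * x^4) - 2*(a*s)*x^2)).measurable.ennreal_ofReal)]
    rw [← ofReal_integral_eq_lintegral_ofReal (int_quartic_exp hs0 (mul_pos ha0 hs0))
      (by filter_upwards with x; positivity)]
    rw [quartic_gauss hs0 (mul_pos ha0 hs0)]
    rw [show 2*(a*s)/s = 2*a by field_simp, show (a*s)^2/(2*s) = a^2*s/2 by field_simp]
    rw [← ENNReal.ofReal_mul hc1]
  have h4 : I = ∫⁻ s in Ioi (0:ℝ), ENNReal.ofReal (g s) := by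
    rw [h2]
    exact setLIntegral_congr_fun measurableSet_Ioi h3
  have hgm : AEStronglyMeasurable g (volume.restrict (Ioi 0)) := by
    apply Measurable.aestronglyMeasurable
    apply Measurable.mul (by fun_prop)
    exact Measurable.mul (by fun_prop) hKm
  have h5 : I.toReal = ∫ s in Ioi (0:ℝ), g s := by
    rw [h4, ← integral_eq_lintegral_of_nonneg_ae ?_ hgm]
    filter_upwards [self_mem_ae_restrict measurableSet_Ioi] with s hs
    have hs0 : (0:ℝ) < s := hs
    have hK := besselK_nonneg (1/4) (a^2*s/2)
    simp only [hg]
    positivity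
  have ha2 : (0:ℝ) < a^2/2 := by positivity
  have h6 : ∫ s in Ioi (0:ℝ), (fun t => t^m * Real.exp (-b*t) * besselK (1/4) t) ((a^2/2) * s)
      = (a^2/2)⁻¹ * ∫ t in Ioi (0:ℝ), t^m * Real.exp (-b*t) * besselK (1/4) t := by
    have := integral_comp_mul_left_Ioi (fun t => t^m * Real.exp (-b*t) * besselK (1/4) t) 0 ha2
    simpa using this
  have h7 : ∀ s : ℝ, g s = (1/4 * Real.sqrt (2*a) * (2/a^2)^m) *
      ((fun t => t^m * Real.exp (-b*t) * besselK (1/4) t) ((a^2/2) * s)) := by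
    intro s
    simp only [hg]
    rw [show (a^2/2)*s = a^2*s/2 by ring,
      show -b * (a^2*s/2) = -s + a^2*s/2 by rw [hb]; field_simp; ring,
      Real.exp_add]
    simp only [div_pow]
    field_simp
    ring
  rw [h1, h5]
  simp_rw [h7]
  rw [integral_const_mul, h6]
  have hsqa : Real.sqrt (2*a) = Real.sqrt 2 * Real.sqrt a := Real.sqrt_mul (by norm_num) a
  have hs2 : Real.sqrt 2 * Real.sqrt 2 = 2 := Real.mul_self_sqrt (by norm_num)
  have hsa : Real.sqrt a * Real.sqrt a = a := Real.mul_self_sqrt ha0.le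
  have h2m : (2:ℝ)^((m:ℝ)-1/2) * Real.sqrt 2 = 2^m := by
    rw [Real.sqrt_eq_rpow, ← Real.rpow_add two_pos]
    rw [show (m:ℝ) - 1/2 + 1/2 = (m:ℝ) by ring]
    exact Real.rpow_natCast 2 m
  have ham : a^(2*(m:ℝ)+3/2) * Real.sqrt a = a^(2*m+2 : ℕ) := by
    rw [Real.sqrt_eq_rpow, ← Real.rpow_add ha0]
    rw [show 2*(m:ℝ)+3/2 + 1/2 = ((2*m+2 : ℕ):ℝ) by push_cast; ring]
    exact Real.rpow_natCast a (2*m+2)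
  have hE : (0:ℝ) < a^(2*(m:ℝ)+3/2) := Real.rpow_pos_of_pos ha0 _
  have hconst : ((m.factorial:ℝ))⁻¹ * (1/4 * Real.sqrt (2*a) * (2/a^2)^m * (a^2/2)⁻¹)
      = (2:ℝ)^((m:ℝ)-1/2)/((m.factorial:ℝ) * a^(2*(m:ℝ)+3/2)) := by
    rw [hsqa]
    rw [div_pow]
    set X := (2:ℝ)^((m:ℝ)-1/2) with hX
    set Y := a^(2*(m:ℝ)+3/2) with hY
    have hY0 : Y ≠ 0 := hE.ne'
    field_simp
    linear_combination (2*2^m*Real.sqrt 2) * ham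
      - (2*a^(2*m+2)*Real.sqrt 2) * h2m
      + (2*a^(2*m+2)*(2:ℝ)^((m:ℝ)-1/2)) * hs2
  linear_combination (∫ t in Ioi (0:ℝ), t^m * Real.exp (-b*t) * besselK (1/4) t) * hconst
end

section
/- Define sequences of polynomials S_m(b), T_m(b) by S_0 = 1, T_0 = 0 and the recurrences S_{m+1}(b) = 2√2(2m+1) S_m(b) - (b+1)[4√2 S_m'(b) - (1+6m) T_m(b) + 4(b+1) T_m'(b)] and T_{m+1}(b) = 3(2m+1) S_m(b) + 4√2 m T_m(b) - 4(b+1)(S_m'(b) + √2 T_m'(b)). Then for every m ≥ 0 and every b > -1, d^m/db^m [ (b+1)^(-1/2) (√2 + √(b+1))^(-1/2) ] = (-1)^m (S_m(b) + √(b+1) T_m(b)) / (2^(2m) (b+1)^(m+1/2) (√2 + √(b+1))^(m+1/2)). -/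
open Polynomial

theorem derivative_formula_ST (S T : ℕ → Polynomial ℝ)
    (hS0 : S 0 = 1) (hT0 : T 0 = 0)
    (hSrec : ∀ m : ℕ, S (m+1) =
        C (2 * Real.sqrt 2 * (2*(m:ℝ)+1)) * S m -
          (X + 1) * (C (4 * Real.sqrt 2) * derivative (S m) -
            C (1 + 6*(m:ℝ)) * T m + C 4 * (X + 1) * derivative (T m)))
    (hTrec : ∀ m : ℕ, T (m+1) =
        C (3*(2*(m:ℝ)+1)) * S m + C (4 * Real.sqrt 2 * (m:ℝ)) * T m -
          C 4 * (X + 1) * (derivative (S m) + C (Real.sqrt 2) * derivative (T m))) :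
    ∀ m : ℕ, ∀ b : ℝ, -1 < b →
      iteratedDeriv m
          (fun y : ℝ => (Real.sqrt (y+1))⁻¹ * (Real.sqrt (Real.sqrt 2 + Real.sqrt (y+1)))⁻¹) b =
        (-1)^m * ((S m).eval b + Real.sqrt (b+1) * (T m).eval b) /
          ((2:ℝ)^(2*m) * (b+1) ^ ((m:ℝ) + 1/2) *
            (Real.sqrt 2 + Real.sqrt (b+1)) ^ ((m:ℝ) + 1/2)) := by
  intro m
  induction m with
  | zero =>
    intro b hb
    have hu : (0:ℝ) < b + 1 := by linarith
    have hw : (0:ℝ) < Real.sqrt 2 + Real.sqrt (b+1) := by positivity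
    simp only [iteratedDeriv_zero, hS0, hT0, Polynomial.eval_one, Polynomial.eval_zero,
      Nat.cast_zero, pow_zero, mul_zero, add_zero, mul_one, one_mul, zero_add]
    rw [Real.sqrt_eq_rpow (Real.sqrt 2 + Real.sqrt (b+1)), Real.sqrt_eq_rpow (b+1),
      one_div ((b+1) ^ ((1:ℝ)/2) * (Real.sqrt 2 + (b+1) ^ ((1:ℝ)/2)) ^ ((1:ℝ)/2)), mul_inv]
  | succ m ih =>
    intro b hb
    have hu : (0:ℝ) < b + 1 := by linarith
    have hspos : 0 < Real.sqrt (b+1) := Real.sqrt_pos.mpr hu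
    set s := Real.sqrt (b+1) with hsdef
    have hq2 : (0:ℝ) < Real.sqrt 2 := by positivity
    set q := Real.sqrt 2 with hqdef
    have hwpos : (0:ℝ) < q + s := by linarith
    have hs2 : s ^ 2 = b + 1 := Real.sq_sqrt hu.le
    set r : ℝ := (m:ℝ) + 1/2 with hrdef
    -- component derivatives
    have hid : HasDerivAt (fun y : ℝ => y + 1) 1 b := by
      simpa using (hasDerivAt_id b).add_const 1
    have hsq : HasDerivAt (fun y : ℝ => Real.sqrt (y+1)) (1/(2*s)) b := by
      simpa [Function.comp_def] using (Real.hasDerivAt_sqrt hu.ne').comp b hid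
    have hP : HasDerivAt (fun y : ℝ => (S m).eval y) ((derivative (S m)).eval b) b :=
      (S m).hasDerivAt b
    have hQ : HasDerivAt (fun y : ℝ => (T m).eval y) ((derivative (T m)).eval b) b :=
      (T m).hasDerivAt b
    have hN : HasDerivAt (fun y : ℝ => (S m).eval y + Real.sqrt (y+1) * (T m).eval y)
        ((derivative (S m)).eval b + (1/(2*s) * (T m).eval b + s * (derivative (T m)).eval b)) b :=
      hP.add (hsq.mul hQ)
    have hA : HasDerivAt (fun y : ℝ => (y+1) ^ r) (r * (b+1) ^ (r-1)) b := by
      simpa [Function.comp_def] using (Real.hasDerivAt_rpow_const (p := r) (Or.inl hu.ne')).comp b hid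
    have hW : HasDerivAt (fun y : ℝ => (q + Real.sqrt (y+1)) ^ r)
        (r * (q+s)^(r-1) * (1/(2*s))) b := by
      simpa [Function.comp_def] using
        (Real.hasDerivAt_rpow_const (p := r) (Or.inl hwpos.ne')).comp b (hsq.const_add q)
    have hD : HasDerivAt (fun y : ℝ => (2:ℝ)^(2*m) * (y+1)^r * (q + Real.sqrt (y+1))^r)
        (((2:ℝ)^(2*m) * (r * (b+1)^(r-1))) * (q+s)^r
          + ((2:ℝ)^(2*m) * (b+1)^r) * (r * (q+s)^(r-1) * (1/(2*s)))) b :=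
      (hA.const_mul _).mul hW
    have hDne : (2:ℝ)^(2*m) * (b+1)^r * (q+s)^r ≠ 0 := by positivity
    have hNum : HasDerivAt (fun y : ℝ => (-1:ℝ)^m *
        ((S m).eval y + Real.sqrt (y+1) * (T m).eval y))
        ((-1:ℝ)^m * ((derivative (S m)).eval b +
          (1/(2*s) * (T m).eval b + s * (derivative (T m)).eval b))) b :=
      hN.const_mul _
    have hG := hNum.div hD hDne
    rw [iteratedDeriv_succ]
    have hev : (iteratedDeriv m
          (fun y : ℝ => (Real.sqrt (y+1))⁻¹ * (Real.sqrt (Real.sqrt 2 + Real.sqrt (y+1)))⁻¹))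
        =ᶠ[nhds b] (fun y : ℝ => (-1:ℝ)^m *
          ((S m).eval y + Real.sqrt (y+1) * (T m).eval y) /
          ((2:ℝ)^(2*m) * (y+1)^r * (q + Real.sqrt (y+1))^r)) := by
      filter_upwards [eventually_gt_nhds hb] with y hy
      exact ih y hy
    rw [hev.deriv_eq, show deriv (fun y : ℝ => (-1:ℝ)^m *
          ((S m).eval y + Real.sqrt (y+1) * (T m).eval y) /
          ((2:ℝ)^(2*m) * (y+1)^r * (q + Real.sqrt (y+1))^r)) b = _ from hG.deriv]
    -- now pure algebra
    rw [hSrec m, hTrec m]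
    simp only [Polynomial.eval_mul, Polynomial.eval_add, Polynomial.eval_sub,
      Polynomial.eval_C, Polynomial.eval_X, Polynomial.eval_one, Polynomial.eval_ofNat]
    push_cast
    rw [show ((m:ℝ) + 1 + 1/2) = r + 1 by rw [hrdef]; ring]
    rw [Real.rpow_add_one hu.ne', Real.rpow_add_one hwpos.ne']
    rw [Real.rpow_sub_one hu.ne', Real.rpow_sub_one hwpos.ne']
    rw [show 2*(m+1) = 2*m + 2 by ring, pow_add]
    rw [← hsdef, ← hs2]
    have hs0 : s ≠ 0 := hspos.ne'
    have hw0 : q + s ≠ 0 := hwpos.ne'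
    have hA0 : ((s:ℝ)^2) ^ r ≠ 0 := by positivity
    have hW0 : ((q+s):ℝ) ^ r ≠ 0 := by positivity
    have h2m : ((2:ℝ))^(2*m) ≠ 0 := by positivity
    field_simp
    ring
end

section
/- For q_1, ..., q_n distinct positive reals, (2/π) ∫_0^∞ Π_{k=1}^n 1/(x² + q_k²) dx = s_{λ(n-1)}(q) / (e_n(q) · s_{λ(n)}(q)), where λ(s) = (s-1, s-2, ..., 1, 0) is the staircase partition, e_n(q) = q_1 q_2 ⋯ q_n, and s_μ denotes the Schur polynomial in the variables q_1, ..., q_n. -/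
open MeasureTheory
open Set Finset Polynomial Matrix

lemma inv_sq_add_sq_eq {a : ℝ} (ha : 0 < a) :
    (fun x : ℝ => (x^2 + a^2)⁻¹) = fun x => a⁻¹ * a⁻¹ * (1 + (a⁻¹ * x)^2)⁻¹ := by
  funext x
  rw [mul_pow, ← mul_inv, ← mul_inv]
  congr 1
  field_simp
  ring

lemma integrableOn_inv_sq_add_sq {a : ℝ} (ha : 0 < a) :
    IntegrableOn (fun x : ℝ => (x^2 + a^2)⁻¹) (Set.Ioi (0:ℝ)) := by
  rw [inv_sq_add_sq_eq ha]
  have h : IntegrableOn (fun x : ℝ => (1 + (a⁻¹ * x)^2)⁻¹) (Set.Ioi (0:ℝ)) := by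
    rw [show (fun x : ℝ => (1 + (a⁻¹ * x)^2)⁻¹) = (fun y : ℝ => (1 + y^2)⁻¹) ∘ (fun x => a⁻¹ * x) from rfl]
    exact (integrableOn_Ioi_comp_mul_left_iff (fun y => (1 + y^2)⁻¹) 0
      (by positivity : (0:ℝ) < a⁻¹)).mpr integrable_inv_one_add_sq.integrableOn
  exact h.const_mul _

lemma integral_inv_sq_add_sq_Ioi {a : ℝ} (ha : 0 < a) :
    ∫ x in Set.Ioi (0:ℝ), (x^2 + a^2)⁻¹ = Real.pi / (2*a) := by
  rw [inv_sq_add_sq_eq ha, MeasureTheory.integral_const_mul,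
    integral_comp_mul_left_Ioi (fun y => (1 + y^2)⁻¹) 0 (by positivity : (0:ℝ) < a⁻¹)]
  simp only [mul_zero, integral_Ioi_inv_one_add_sq, Real.arctan_zero, sub_zero, smul_eq_mul,
    inv_inv]
  field_simp


lemma det_rev_ne_zero {N : ℕ} (v : Fin N → ℝ) (hv : ∀ i, v i ≠ 0)
    (hinj : Function.Injective v) :
    Matrix.det (Matrix.of fun i j : Fin N => v i ^ (N - 1 - (j:ℕ))) ≠ 0 := by
  have h : (Matrix.of fun i j : Fin N => v i ^ (N - 1 - (j:ℕ)))
      = Matrix.of fun i j : Fin N => (v i ^ (N-1)) * (Matrix.vandermonde (fun i => (v i)⁻¹)) i j := by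
    ext i j
    simp only [Matrix.of_apply, Matrix.vandermonde_apply]
    rw [pow_sub₀ _ (hv i) (Nat.le_sub_one_of_lt j.isLt), inv_pow]
  rw [h, Matrix.det_mul_column]
  refine mul_ne_zero ?_ ?_
  · exact Finset.prod_ne_zero_iff.mpr fun i _ => pow_ne_zero _ (hv i)
  · exact Matrix.det_vandermonde_ne_zero_iff.mpr fun a b hab => hinj (by
      have := congrArg (·⁻¹) hab
      simpa using this)

lemma coeff_interpolate {N : ℕ} (r : Fin (N+1) → ℝ) (g : Fin (N+1) → ℝ) :
    (Lagrange.interpolate Finset.univ r g).coeff N =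
      ∑ k, g k * ∏ j ∈ Finset.univ.erase k, (r k - r j)⁻¹ := by
  rw [Lagrange.interpolate_apply, Polynomial.finset_sum_coeff]
  refine Finset.sum_congr rfl fun k _ => ?_
  rw [Polynomial.coeff_C_mul]
  congr 1
  have hb : Lagrange.basis Finset.univ r k =
      Polynomial.C (∏ j ∈ Finset.univ.erase k, (r k - r j)⁻¹) *
        ∏ j ∈ Finset.univ.erase k, (X - Polynomial.C (r j)) := by
    rw [Lagrange.basis, map_prod, ← Finset.prod_mul_distrib]
    exact Finset.prod_congr rfl fun j _ => rfl
  have hcard : (Finset.univ.erase k).card = N := by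
    rw [Finset.card_erase_of_mem (Finset.mem_univ k), Finset.card_univ, Fintype.card_fin]
    omega
  have hmonic : (∏ j ∈ Finset.univ.erase k, (X - Polynomial.C (r j))).Monic :=
    monic_prod_of_monic _ _ fun j _ => monic_X_sub_C _
  have hdeg : (∏ j ∈ Finset.univ.erase k, (X - Polynomial.C (r j))).natDegree = N := by
    rw [natDegree_prod _ _ fun j _ => X_sub_C_ne_zero _]
    simp [hcard]
  rw [hb, Polynomial.coeff_C_mul]
  have h1 : (∏ j ∈ Finset.univ.erase k, (X - Polynomial.C (r j))).coeff N = 1 := by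
    have := hmonic.coeff_natDegree
    rwa [hdeg] at this
  rw [h1, mul_one]

theorem rational_integral_schur (n : ℕ) (hn : 1 ≤ n) (q : Fin n → ℝ)
    (hq : ∀ i, 0 < q i) (hdist : Function.Injective q) :
    (2 / Real.pi) * ∫ x in Set.Ioi (0:ℝ), ∏ k, (x^2 + (q k)^2)⁻¹ =
      (Matrix.det (Matrix.of fun i j : Fin n => q i ^ ((n - 2 - (j:ℕ)) + (n - 1 - (j:ℕ)))) /
          Matrix.det (Matrix.of fun i j : Fin n => q i ^ (n - 1 - (j:ℕ)))) /
        ((∏ i, q i) *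
          (Matrix.det (Matrix.of fun i j : Fin n => q i ^ (2 * (n - 1 - (j:ℕ)))) /
            Matrix.det (Matrix.of fun i j : Fin n => q i ^ (n - 1 - (j:ℕ))))) := by
  obtain ⟨m, rfl⟩ : ∃ m, n = m + 1 := ⟨n - 1, (Nat.succ_pred_eq_of_pos hn).symm⟩
  obtain ⟨r, hr_def⟩ : ∃ r : Fin (m+1) → ℝ, r = fun k => (q k)^2 := ⟨_, rfl⟩
  have hr0 : ∀ k, r k ≠ 0 := fun k => by rw [hr_def]; have := hq k; positivity
  have hrinj : Function.Injective r := by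
    rw [hr_def]
    intro a b h
    apply hdist
    have h2 : (q a - q b) * (q a + q b) = 0 := by
      simp only at h; linear_combination h
    rcases mul_eq_zero.mp h2 with h3 | h3
    · linarith
    · nlinarith [hq a, hq b]
  have hrinj2 : Function.Injective (fun k => (q k)^2 : Fin (m+1) → ℝ) := hr_def ▸ hrinj
  have hint : (2 / Real.pi) * (∫ x in Set.Ioi (0:ℝ), ∏ k, (x^2 + (q k)^2)⁻¹)
      = ∑ k, (∏ j ∈ Finset.univ.erase k, ((q j)^2 - (q k)^2)⁻¹) * (q k)⁻¹ := by
    clear hr_def hr0 hrinj hn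
    set c : Fin (m+1) → ℝ := fun k => ∏ j ∈ Finset.univ.erase k, ((q j)^2 - (q k)^2)⁻¹ with hc_def
    have key : ∀ t : ℝ, ∑ k, ∏ j ∈ Finset.univ.erase k,
        (((q j)^2 - (q k)^2)⁻¹ * (t + (q j)^2)) = 1 := by
      intro t
      have hinj : Set.InjOn (fun k => -((q k)^2)) (Finset.univ : Finset (Fin (m+1))) :=
        fun a _ b _ h => hrinj2 (by simpa using (neg_injective h))
      have hs := Lagrange.sum_basis hinj ⟨0, Finset.mem_univ 0⟩
      have := congrArg (Polynomial.eval t) hs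
      rw [Polynomial.eval_finset_sum, Polynomial.eval_one] at this
      rw [← this]
      refine Finset.sum_congr rfl fun k _ => ?_
      rw [Lagrange.basis, Polynomial.eval_prod]
      refine Finset.prod_congr rfl fun j hj => ?_
      simp only [Lagrange.basisDivisor, eval_mul, eval_C, eval_sub, eval_X]
      ring_nf
    have hpf : ∀ x : ℝ, ∏ k, (x^2 + (q k)^2)⁻¹ = ∑ k, c k * (x^2 + (q k)^2)⁻¹ := by
      intro x
      have hpos : ∀ i : Fin (m+1), (0:ℝ) < x^2 + (q i)^2 := fun i => by
        have := hq i; positivity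
      calc ∏ k, (x^2 + (q k)^2)⁻¹
          = (∑ k, ∏ j ∈ Finset.univ.erase k, (((q j)^2 - (q k)^2)⁻¹ * (x^2 + (q j)^2)))
              * ∏ k, (x^2 + (q k)^2)⁻¹ := by rw [key (x^2), one_mul]
        _ = ∑ k, c k * (x^2 + (q k)^2)⁻¹ := by
            rw [Finset.sum_mul]
            refine Finset.sum_congr rfl fun k _ => ?_
            rw [Finset.prod_mul_distrib]
            have h2 : (∏ j ∈ Finset.univ.erase k, (x^2 + (q j)^2)) ≠ 0 :=
              Finset.prod_ne_zero_iff.mpr fun j _ => (hpos j).ne'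
            have h1 : (∏ j ∈ Finset.univ.erase k, (x^2 + (q j)^2)) * ∏ i, (x^2 + (q i)^2)⁻¹
                = (x^2 + (q k)^2)⁻¹ := by
              rw [Finset.prod_inv_distrib, ← Finset.prod_erase_mul _ _ (Finset.mem_univ k),
                mul_inv, ← mul_assoc, mul_inv_cancel₀ h2, one_mul]
            rw [mul_assoc, h1]
    have hintg : (∫ x in Set.Ioi (0:ℝ), ∏ k, (x^2 + (q k)^2)⁻¹)
        = ∑ k, c k * (Real.pi / (2 * q k)) := by
      rw [show (fun x : ℝ => ∏ k, (x^2 + (q k)^2)⁻¹)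
          = fun x => ∑ k, c k * (x^2 + (q k)^2)⁻¹ from funext hpf]
      rw [MeasureTheory.integral_finset_sum _
        (fun k _ => (integrableOn_inv_sq_add_sq (hq k)).const_mul (c k))]
      refine Finset.sum_congr rfl fun k _ => ?_
      rw [MeasureTheory.integral_const_mul, integral_inv_sq_add_sq_Ioi (hq k)]
    rw [hintg, Finset.mul_sum]
    refine Finset.sum_congr rfl fun k _ => ?_
    rw [show (2:ℝ)/Real.pi * (c k * (Real.pi/(2*q k))) = c k * ((2/Real.pi) * (Real.pi/(2*q k))) from
      by ring, show (2:ℝ)/Real.pi * (Real.pi/(2*q k)) = (q k)⁻¹ from by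
      have h1 := Real.pi_ne_zero
      have h2 := (hq k).ne'
      field_simp]
  rw [hint]
  have hrinjOn : Set.InjOn r (Finset.univ : Finset (Fin (m+1))) := fun a _ b _ h => hrinj h
  set B : Matrix (Fin (m+1)) (Fin (m+1)) ℝ :=
    Matrix.of fun i j : Fin (m+1) => q i ^ (2 * (m+1 - 1 - (j:ℕ))) with hB_def
  set g : Fin (m+1) → ℝ := fun k => (q k)⁻¹ with hg_def
  set P : Polynomial ℝ := Lagrange.interpolate Finset.univ r g with hP_def
  set xv : Fin (m+1) → ℝ := fun j => P.coeff (m - (j:ℕ)) with hxv_def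
  -- degree bound
  have hdegP : P.natDegree < m + 1 := by
    by_cases hP : P = 0
    · simp [hP]
    · rw [Polynomial.natDegree_lt_iff_degree_lt hP]
      have := Lagrange.degree_interpolate_lt g hrinjOn
      simpa [Finset.card_univ, -Lagrange.interpolate_apply] using this
  -- B *ᵥ xv = g
  have hmulvec : B *ᵥ xv = g := by
    funext i
    simp only [Matrix.mulVec, dotProduct, hB_def, Matrix.of_apply, hxv_def]
    have hterm : ∀ j : Fin (m+1),
        q i ^ (2 * (m+1 - 1 - (j:ℕ))) * P.coeff (m - (j:ℕ))
          = P.coeff (m - (j:ℕ)) * (r i) ^ (m - (j:ℕ)) := by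
      intro j
      have h1 : (r i) ^ (m - (j:ℕ)) = q i ^ (2 * (m+1 - 1 - (j:ℕ))) := by
        rw [hr_def, ← pow_mul]
        congr 1
      rw [h1, mul_comm]
    rw [Finset.sum_congr rfl fun j _ => hterm j]
    rw [Fin.sum_univ_eq_sum_range (fun j => P.coeff (m - j) * (r i) ^ (m - j)) (m+1)]
    have hrefl := Finset.sum_range_reflect (fun d => P.coeff d * (r i) ^ d) (m+1)
    simp only [Nat.add_sub_cancel] at hrefl
    rw [hrefl, ← Polynomial.eval_eq_sum_range' hdegP (r i)]
    rw [hP_def, Lagrange.eval_interpolate_at_node g hrinjOn (Finset.mem_univ i)]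
  -- Cramer
  have hcram : (B.updateCol 0 g).det = B.det * xv 0 := by
    have h1 : Matrix.cramer B g = B.det • xv := by
      rw [← hmulvec, Matrix.cramer_eq_adjugate_mulVec, Matrix.mulVec_mulVec, Matrix.adjugate_mul,
        Matrix.smul_mulVec, Matrix.one_mulVec]
    have h2 := congrFun h1 0
    rw [Matrix.cramer_apply] at h2
    simpa using h2
  -- numerator matrix
  have hA : (Matrix.of fun i j : Fin (m+1) => q i ^ ((m+1 - 2 - (j:ℕ)) + (m+1 - 1 - (j:ℕ)))).det
      = (∏ i, q i) * ((-1:ℝ)^m * (B.updateCol 0 g).det) := by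
    have hM : (Matrix.of fun i j : Fin (m+1) => q i ^ ((m+1 - 2 - (j:ℕ)) + (m+1 - 1 - (j:ℕ))))
        = Matrix.of (fun i j =>
            q i * ((B.updateCol 0 g).submatrix id (finRotate (m+1))) i j) := by
      ext i j
      simp only [Matrix.of_apply, Matrix.submatrix_apply, id_eq, finRotate_succ_apply,
        Matrix.updateCol_apply]
      by_cases hj : j = Fin.last m
      · subst hj
        rw [if_pos (Fin.last_add_one m), Fin.val_last,
          show (m+1 - 2 - m) + (m+1 - 1 - m) = 0 from by omega, pow_zero, hg_def,
          mul_inv_cancel₀ (hq i).ne']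
      · have hjm : (j:ℕ) < m := Fin.val_lt_last hj
        have hval : ((j + 1 : Fin (m+1)) : ℕ) = (j:ℕ) + 1 := by
          rw [Fin.val_add_one]
          simp [hj]
        have hne : (j + 1 : Fin (m+1)) ≠ 0 := by
          intro h0
          rw [h0] at hval
          simp at hval
        rw [if_neg hne]
        simp only [hB_def, Matrix.of_apply, hval]
        rw [show (m+1 - 2 - (j:ℕ)) + (m+1 - 1 - (j:ℕ)) = 2 * (m+1 - 1 - ((j:ℕ)+1)) + 1 from
          by omega, pow_succ']
    rw [hM]
    rw [show Matrix.of (fun i j => q i * ((B.updateCol 0 g).submatrix id (finRotate (m+1))) i j)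
        = Matrix.of (fun i j => q i * ((B.updateCol 0 g).submatrix id (finRotate (m+1))) i j)
        from rfl]
    rw [Matrix.det_mul_column, Matrix.det_permute', sign_finRotate]
    push_cast
    ring
  -- x 0
  have hx0 : xv 0 = ∑ k, g k * ∏ j ∈ Finset.univ.erase k, (r k - r j)⁻¹ := by
    have h := coeff_interpolate r g
    simp only [hxv_def, Fin.val_zero, Nat.sub_zero]
    exact h
  -- nonvanishing
  have hD : Matrix.det (Matrix.of fun i j : Fin (m+1) => q i ^ (m+1 - 1 - (j:ℕ))) ≠ 0 :=
    det_rev_ne_zero q (fun i => (hq i).ne') hdist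
  have hBr : B = Matrix.of fun i j : Fin (m+1) => r i ^ (m+1 - 1 - (j:ℕ)) := by
    ext i j
    simp only [hB_def, Matrix.of_apply, hr_def, ← pow_mul, mul_comm]
  have hB0 : B.det ≠ 0 := by
    rw [hBr]; exact det_rev_ne_zero r hr0 hrinj
  have hp : (∏ i, q i) ≠ 0 := Finset.prod_ne_zero_iff.mpr fun i _ => (hq i).ne'
  -- LHS transformation
  have hLHS : ∑ k, (∏ j ∈ Finset.univ.erase k, ((q j)^2 - (q k)^2)⁻¹) * (q k)⁻¹
      = (-1:ℝ)^m * ∑ k, g k * ∏ j ∈ Finset.univ.erase k, (r k - r j)⁻¹ := by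
    rw [Finset.mul_sum]
    refine Finset.sum_congr rfl fun k _ => ?_
    have hck : ∏ j ∈ Finset.univ.erase k, ((q j)^2 - (q k)^2)⁻¹
        = (-1:ℝ)^m * ∏ j ∈ Finset.univ.erase k, (r k - r j)⁻¹ := by
      have : ∀ j ∈ Finset.univ.erase k, ((q j)^2 - (q k)^2)⁻¹ = (-1) * (r k - r j)⁻¹ := by
        intro j _
        rw [hr_def, show (q j)^2 - (q k)^2 = -((q k)^2 - (q j)^2) from by ring, inv_neg]
        ring
      rw [Finset.prod_congr rfl this, Finset.prod_mul_distrib, Finset.prod_const,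
        Finset.card_erase_of_mem (Finset.mem_univ k), Finset.card_univ, Fintype.card_fin,
        Nat.add_sub_cancel]
    rw [hck, hg_def]
    ring
  set dD := Matrix.det (Matrix.of fun i j : Fin (m+1) => q i ^ (m+1 - 1 - (j:ℕ))) with hdD_def
  set S := ∑ k, g k * ∏ j ∈ Finset.univ.erase k, (r k - r j)⁻¹ with hS_def
  rw [hLHS, hA, hcram, hx0]
  field_simp
end
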